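/- arXiv:2012.15317 — 11 statements merged into one kernel-verified Lean document; each statement's English description precedes it below -/
import Mathlib

section
/- Let Γ > 0 and ξ : [0,∞) → ℝ nonnegative and continuous. Then for all t ≥ 0, (∫₀ᵗ ξ(s) e^{-Γs/2} ds)(∫₀ᵗ ξ(s) e^{Γs/2} ds) ≥ (3/2) ∫₀ᵗ ξ(s) e^{-Γs/2} (∫₀ˢ ξ(τ) e^{Γτ/2} dτ) ds. -/
open MeasureTheory intervalIntegral Real

theorem stmt1 (Γ : ℝ) (hΓ : 0 < Γ) (ξ : ℝ → ℝ)
    (hξ : ∀ s, 0 ≤ s → 0 ≤ ξ s) (hcont : Continuous ξ) :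
    ∀ t : ℝ, 0 ≤ t →
      (∫ s in (0:ℝ)..t, ξ s * Real.exp (-Γ * s / 2)) *
          (∫ s in (0:ℝ)..t, ξ s * Real.exp (Γ * s / 2)) ≥
        (3 / 2) * ∫ s in (0:ℝ)..t,
          ξ s * Real.exp (-Γ * s / 2) * ∫ τ in (0:ℝ)..s, ξ τ * Real.exp (Γ * τ / 2) := by
  set f : ℝ → ℝ := fun s => ξ s * Real.exp (-Γ * s / 2) with hf
  set g : ℝ → ℝ := fun s => ξ s * Real.exp (Γ * s / 2) with hg
  have hfc : Continuous f := hcont.mul (Real.continuous_exp.comp (by continuity))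
  have hgc : Continuous g := hcont.mul (Real.continuous_exp.comp (by continuity))
  set A : ℝ → ℝ := fun t => ∫ s in (0:ℝ)..t, f s with hA
  set B : ℝ → ℝ := fun t => ∫ s in (0:ℝ)..t, g s with hB
  have hAc : Continuous A := intervalIntegral.continuous_primitive
    (fun a b => hfc.intervalIntegrable a b) 0
  have hBc : Continuous B := intervalIntegral.continuous_primitive
    (fun a b => hgc.intervalIntegrable a b) 0
  set h : ℝ → ℝ := fun s => f s * B s with hh
  have hhc : Continuous h := hfc.mul hBc
  set C : ℝ → ℝ := fun t => ∫ s in (0:ℝ)..t, h s with hC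
  set F : ℝ → ℝ := fun t => A t * B t - (3 / 2) * C t with hF
  -- derivative of F
  have hderiv : ∀ x : ℝ, HasDerivAt F (g x * A x - (1/2) * (f x * B x)) x := by
    intro x
    have hA' : HasDerivAt A (f x) x := (hfc.integral_hasStrictDerivAt 0 x).hasDerivAt
    have hB' : HasDerivAt B (g x) x := (hgc.integral_hasStrictDerivAt 0 x).hasDerivAt
    have hC' : HasDerivAt C (h x) x := (hhc.integral_hasStrictDerivAt 0 x).hasDerivAt
    have := (hA'.mul hB').sub (hC'.const_mul (3/2 : ℝ))
    convert this using 1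
    · rfl
    · rfl
    · rfl
    show _ = f x * B x + A x * g x - 3 / 2 * (f x * B x)
    ring
  -- key inequality: derivative nonneg on [0,∞)
  have hkey : ∀ x : ℝ, 0 ≤ x → 0 ≤ g x * A x - (1/2) * (f x * B x) := by
    intro x hx
    have hAx : A x = ∫ s in (0:ℝ)..x, f s := rfl
    have hBx : B x = ∫ s in (0:ℝ)..x, g s := rfl
    have key2 : (∫ s in (0:ℝ)..x, ξ s *
          (Real.exp (Γ * x / 2) * Real.exp (-Γ * s / 2)
            - (1/2) * (Real.exp (-Γ * x / 2) * Real.exp (Γ * s / 2))))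
        = Real.exp (Γ * x / 2) * A x - (1/2 * Real.exp (-Γ * x / 2)) * B x := by
      rw [hAx, hBx, ← intervalIntegral.integral_const_mul,
        ← intervalIntegral.integral_const_mul,
        ← intervalIntegral.integral_sub ((hfc.intervalIntegrable 0 x).const_mul _)
          ((hgc.intervalIntegrable 0 x).const_mul _)]
      congr 1
      funext s
      simp only [hf, hg]
      ring
    have : g x * A x - (1/2) * (f x * B x)
        = ξ x * ∫ s in (0:ℝ)..x, ξ s *
          (Real.exp (Γ * x / 2) * Real.exp (-Γ * s / 2)
            - (1/2) * (Real.exp (-Γ * x / 2) * Real.exp (Γ * s / 2))) := by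
      rw [key2]
      simp only [hg, hf]
      ring
    rw [this]
    apply mul_nonneg (hξ x hx)
    apply intervalIntegral.integral_nonneg hx
    intro s hs
    apply mul_nonneg (hξ s hs.1)
    rw [← Real.exp_add, ← Real.exp_add, sub_nonneg]
    have h1 : (0:ℝ) ≤ Γ * x / 2 + -Γ * s / 2 := by nlinarith [hs.1, hs.2]
    have h2 : -Γ * x / 2 + Γ * s / 2 ≤ 0 := by nlinarith [hs.1, hs.2]
    calc (1/2 : ℝ) * Real.exp (-Γ * x / 2 + Γ * s / 2)
        ≤ (1/2) * 1 := by
          have := Real.exp_le_one_iff.mpr h2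
          nlinarith [Real.exp_pos (-Γ * x / 2 + Γ * s / 2)]
      _ ≤ 1 := by norm_num
      _ ≤ Real.exp (Γ * x / 2 + -Γ * s / 2) := Real.one_le_exp h1
  -- monotonicity
  have hmono : MonotoneOn F (Set.Ici (0:ℝ)) := by
    apply monotoneOn_of_deriv_nonneg (convex_Ici 0)
      (Continuous.continuousOn (by
        exact (hAc.mul hBc).sub (continuous_const.mul
          (intervalIntegral.continuous_primitive (fun a b => hhc.intervalIntegrable a b) 0))))
      (fun x hx => (hderiv x).differentiableAt.differentiableWithinAt)
    intro x hx
    rw [(hderiv x).deriv]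
    exact hkey x (le_of_lt (by simpa using hx))
  intro t ht
  have h0 : F 0 = 0 := by
    simp [hF, hA, hB, hC]
  have hle : F 0 ≤ F t := hmono (Set.self_mem_Ici) (Set.mem_Ici.mpr ht) ht
  rw [h0] at hle
  have hle2 : (0:ℝ) ≤ A t * B t - 3 / 2 * C t := hle
  exact sub_nonneg.mp hle2
end

section
/- Let Γ > 0, κ ∈ [0,1], and ξ : [0,∞) → ℝ nonnegative and continuous. Then for all t ≥ 0, 2κΓ (∫₀ᵗ ξ(s) e^{Γs/2} ds)(∫₀ᵗ ξ(s) e^{-Γs/2} ds) ≤ 1 + 4κΓ ∫₀ᵗ ξ(s) e^{Γs/2} (∫₀ˢ ξ(τ) e^{-Γτ/2} dτ) ds. -/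
open MeasureTheory intervalIntegral Real

private lemma hasDerivAt_prim {f : ℝ → ℝ} (hf : Continuous f) (x : ℝ) :
    HasDerivAt (fun u => ∫ s in (0:ℝ)..u, f s) (f x) x :=
  intervalIntegral.integral_hasDerivAt_right (hf.intervalIntegrable 0 x)
    (hf.stronglyMeasurableAtFilter _ _) hf.continuousAt

theorem stmt2 (Γ κ : ℝ) (hΓ : 0 < Γ) (hκ0 : 0 ≤ κ) (hκ1 : κ ≤ 1) (ξ : ℝ → ℝ)
    (hξ : ∀ s, 0 ≤ s → 0 ≤ ξ s) (hcont : Continuous ξ) :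
    ∀ t : ℝ, 0 ≤ t →
      2 * κ * Γ * (∫ s in (0:ℝ)..t, ξ s * Real.exp (Γ * s / 2)) *
          (∫ s in (0:ℝ)..t, ξ s * Real.exp (-Γ * s / 2)) ≤
        1 + 4 * κ * Γ * ∫ s in (0:ℝ)..t,
          ξ s * Real.exp (Γ * s / 2) * ∫ τ in (0:ℝ)..s, ξ τ * Real.exp (-Γ * τ / 2) := by
  intro t ht
  set gp : ℝ → ℝ := fun s => ξ s * Real.exp (Γ * s / 2) with hgp
  set gm : ℝ → ℝ := fun s => ξ s * Real.exp (-Γ * s / 2) with hgm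
  have hcgp : Continuous gp := hcont.mul (by continuity)
  have hcgm : Continuous gm := hcont.mul (by continuity)
  set F : ℝ → ℝ := fun x => ∫ s in (0:ℝ)..x, gp s with hF
  set G : ℝ → ℝ := fun x => ∫ s in (0:ℝ)..x, gm s with hG
  have hdF : ∀ x, HasDerivAt F (gp x) x := hasDerivAt_prim hcgp
  have hdG : ∀ x, HasDerivAt G (gm x) x := hasDerivAt_prim hcgm
  have hcF : Continuous F := continuous_iff_continuousAt.2 fun x => (hdF x).continuousAt
  have hcG : Continuous G := continuous_iff_continuousAt.2 fun x => (hdG x).continuousAt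
  set H : ℝ → ℝ := fun x => ∫ s in (0:ℝ)..x, gp s * G s with hH
  have hcint : Continuous fun s => gp s * G s := hcgp.mul hcG
  have hdH : ∀ x, HasDerivAt H (gp x * G x) x := hasDerivAt_prim hcint
  -- nonnegativity of G on [0, ∞)
  have hGnn : ∀ x, 0 ≤ x → 0 ≤ G x := by
    intro x hx
    apply intervalIntegral.integral_nonneg hx
    intro s hs
    exact mul_nonneg (hξ s hs.1) (Real.exp_pos _).le
  have hFnn : 0 ≤ F t := by
    apply intervalIntegral.integral_nonneg ht
    intro s hs
    exact mul_nonneg (hξ s hs.1) (Real.exp_pos _).le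
  have hHnn : 0 ≤ H t := by
    apply intervalIntegral.integral_nonneg ht
    intro s hs
    exact mul_nonneg (mul_nonneg (hξ s hs.1) (Real.exp_pos _).le) (hGnn s hs.1)
  -- key pointwise : exp(-Γx/2) * F x ≤ exp(Γx/2) * G x  for x ≥ 0
  have hkey : ∀ x, 0 ≤ x → Real.exp (-Γ * x / 2) * F x ≤ Real.exp (Γ * x / 2) * G x := by
    intro x hx
    rw [hF, hG, ← intervalIntegral.integral_const_mul, ← intervalIntegral.integral_const_mul]
    apply intervalIntegral.integral_mono_on hx
      ((continuous_const.mul hcgp).intervalIntegrable 0 x)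
      ((continuous_const.mul hcgm).intervalIntegrable 0 x)
    intro s hs
    simp only [hgp, hgm]
    have h1 : Real.exp (-Γ * x / 2) * Real.exp (Γ * s / 2)
        ≤ Real.exp (Γ * x / 2) * Real.exp (-Γ * s / 2) := by
      rw [← Real.exp_add, ← Real.exp_add]
      apply Real.exp_le_exp.2
      nlinarith [hs.1, hs.2, hΓ.le]
    have := hξ s hs.1
    calc Real.exp (-Γ * x / 2) * (ξ s * Real.exp (Γ * s / 2))
        = ξ s * (Real.exp (-Γ * x / 2) * Real.exp (Γ * s / 2)) := by ring
      _ ≤ ξ s * (Real.exp (Γ * x / 2) * Real.exp (-Γ * s / 2)) := by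
          exact mul_le_mul_of_nonneg_left h1 this
      _ = Real.exp (Γ * x / 2) * (ξ s * Real.exp (-Γ * s / 2)) := by ring
  -- ψ := 2H - F*G is monotone on [0,t]
  set ψ : ℝ → ℝ := fun x => 2 * H x - F x * G x with hψ
  have hdψ : ∀ x, HasDerivAt ψ (2 * (gp x * G x) - (gp x * G x + F x * gm x)) x := by
    intro x
    exact ((hdH x).const_mul 2).sub ((hdF x).mul (hdG x))
  have hmono : MonotoneOn ψ (Set.Icc 0 t) := by
    apply monotoneOn_of_deriv_nonneg (convex_Icc 0 t)
    · exact (Continuous.continuousOn (by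
        exact ((continuous_const.mul (continuous_iff_continuousAt.2
          fun x => (hdH x).continuousAt)).sub (hcF.mul hcG))))
    · intro x _
      exact (hdψ x).differentiableAt.differentiableWithinAt
    · intro x hx
      rw [interior_Icc] at hx
      rw [(hdψ x).deriv]
      have hx0 : 0 ≤ x := hx.1.le
      have h2 : gm x * F x ≤ gp x * G x := by
        simp only [hgp, hgm]
        have := hkey x hx0
        have hξx := hξ x hx0
        calc ξ x * Real.exp (-Γ * x / 2) * F x
            = ξ x * (Real.exp (-Γ * x / 2) * F x) := by ring
          _ ≤ ξ x * (Real.exp (Γ * x / 2) * G x) := mul_le_mul_of_nonneg_left this hξx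
          _ = ξ x * Real.exp (Γ * x / 2) * G x := by ring
      nlinarith [h2]
  have hψ0 : ψ 0 = 0 := by
    simp [hψ, hH, hF, hG, intervalIntegral.integral_same]
  have hle : F t * G t ≤ 2 * H t := by
    have := hmono (Set.left_mem_Icc.2 ht) (Set.right_mem_Icc.2 ht) ht
    rw [hψ0] at this
    simp only [hψ] at this
    linarith
  have hGt := hGnn t ht
  have hκΓ : 0 ≤ κ * Γ := mul_nonneg hκ0 hΓ.le
  calc 2 * κ * Γ * F t * G t = 2 * (κ * Γ) * (F t * G t) := by ring
    _ ≤ 2 * (κ * Γ) * (2 * H t) := by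
        apply mul_le_mul_of_nonneg_left hle (by linarith)
    _ = 4 * κ * Γ * H t := by ring
    _ ≤ 1 + 4 * κ * Γ * H t := by linarith
end

section
/- Let κ ∈ (0,1], Γ > 0, and α > 0 with α ≠ 1. Define B(t) = (16κα/(α²−1)) e^{−(1+α)Γt/2} + (1 − 8κ/(α−1)) e^{−Γt} − (8κ/(α+1)) e^{−(1+α)Γt}. If α ≥ 8κ + 1, then B(t) > 0 for all t ≥ 0. -/
open Real

theorem stmt7 (Γ κ α : ℝ) (hΓ : 0 < Γ) (hκ0 : 0 < κ) (hκ1 : κ ≤ 1)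
    (hα : 0 < α) (hα1 : α ≠ 1) (h : 8 * κ + 1 ≤ α) :
    ∀ t : ℝ, 0 ≤ t →
      0 < (16 * κ * α / (α ^ 2 - 1)) * Real.exp (-(1 + α) * Γ * t / 2) +
            (1 - 8 * κ / (α - 1)) * Real.exp (-Γ * t) -
          (8 * κ / (α + 1)) * Real.exp (-(1 + α) * Γ * t) := by
  intro t ht
  have hα1' : 1 < α := by nlinarith
  set x := Real.exp (-(1 + α) * Γ * t / 2) with hxdef
  set y := Real.exp (-Γ * t) with hydef
  have hx : 0 < x := Real.exp_pos _
  have hy : 0 < y := Real.exp_pos _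
  have hx1 : x ≤ 1 := by
    rw [hxdef]
    apply Real.exp_le_one_iff.mpr
    nlinarith [mul_nonneg (mul_nonneg (by linarith : (0:ℝ) ≤ 1 + α) hΓ.le) ht]
  have hxy : x ≤ y := by
    rw [hxdef, hydef]
    apply Real.exp_le_exp.mpr
    nlinarith [mul_nonneg (mul_nonneg (by linarith : (0:ℝ) ≤ α - 1) hΓ.le) ht]
  have hexp : Real.exp (-(1 + α) * Γ * t) = x ^ 2 := by
    rw [hxdef, sq, ← Real.exp_add]
    congr 1
    ring
  rw [hexp]
  have hA : 16 * κ * α / (α ^ 2 - 1) = 8 * κ / (α + 1) + 8 * κ / (α - 1) := by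
    have h1 : α + 1 ≠ 0 := by nlinarith
    have h2 : α - 1 ≠ 0 := by nlinarith
    have h3 : α ^ 2 - 1 ≠ 0 := by
      intro hc; nlinarith [sq_nonneg (α - 1)]
    field_simp
    ring
  rw [hA]
  have hd : 8 * κ / (α - 1) ≤ 1 := by
    rw [div_le_one (by nlinarith)]
    nlinarith
  have hc : 0 < 8 * κ / (α + 1) := by positivity
  have hd0 : 0 < 8 * κ / (α - 1) := by
    apply div_pos (by nlinarith) (by nlinarith)
  nlinarith [mul_nonneg (sub_nonneg.mpr hd) (sub_nonneg.mpr hxy),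
    mul_pos hc (mul_pos hx (by nlinarith : (0:ℝ) < 1 - x + 1)),
    mul_nonneg hc.le (mul_nonneg hx.le (sub_nonneg.mpr hx1))]
end

section
/- Let κ ∈ (0,1], Γ > 0, and α ∈ (0,1). Define B(t) = (16κα/(α²−1)) e^{−(1+α)Γt/2} + (1 − 8κ/(α−1)) e^{−Γt} − (8κ/(α+1)) e^{−(1+α)Γt}. Then B(0) = 1 and there exists t > 0 with B(t) = 0. -/
open Real

theorem stmt8 (Γ κ α : ℝ) (hΓ : 0 < Γ) (hκ0 : 0 < κ) (hκ1 : κ ≤ 1)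
    (hα0 : 0 < α) (hα1 : α < 1) :
    (fun t : ℝ => (16 * κ * α / (α ^ 2 - 1)) * Real.exp (-(1 + α) * Γ * t / 2) +
          (1 - 8 * κ / (α - 1)) * Real.exp (-Γ * t) -
        (8 * κ / (α + 1)) * Real.exp (-(1 + α) * Γ * t)) 0 = 1 ∧
      ∃ t : ℝ, 0 < t ∧
        (16 * κ * α / (α ^ 2 - 1)) * Real.exp (-(1 + α) * Γ * t / 2) +
            (1 - 8 * κ / (α - 1)) * Real.exp (-Γ * t) -
          (8 * κ / (α + 1)) * Real.exp (-(1 + α) * Γ * t) = 0 := by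
  set f : ℝ → ℝ := fun t : ℝ => (16 * κ * α / (α ^ 2 - 1)) * Real.exp (-(1 + α) * Γ * t / 2) +
          (1 - 8 * κ / (α - 1)) * Real.exp (-Γ * t) -
        (8 * κ / (α + 1)) * Real.exp (-(1 + α) * Γ * t) with hf
  have hm1 : α - 1 ≠ 0 := by nlinarith
  have hp1 : (0:ℝ) < α + 1 := by linarith
  have hsq : α ^ 2 - 1 ≠ 0 := by nlinarith
  have h0 : f 0 = 1 := by
    simp only [hf, mul_zero, zero_div, Real.exp_zero, mul_one]
    field_simp
    ring
  refine ⟨h0, ?_⟩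
  -- constants
  set c : ℝ := 16 * κ * α / (1 - α ^ 2) with hc
  have hc0 : 0 < c := by
    apply div_pos (by positivity)
    nlinarith
  set M : ℝ := 1 + 8 * κ / (1 - α) with hM
  have hM0 : 0 < M := by
    have h : 0 < 8 * κ / (1 - α) := div_pos (by linarith) (by linarith)
    rw [hM]; linarith
  set x : ℝ := max (Real.log (M / c)) 0 + 1 with hx
  have hx0 : 0 < x := by positivity
  set T : ℝ := 2 * x / ((1 - α) * Γ) with hT
  have hden : 0 < (1 - α) * Γ := by
    apply mul_pos (by linarith) hΓ
  have hT0 : 0 < T := by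
    apply div_pos (by linarith) hden
  -- key inequality : M < c * exp ((1-α)*Γ*T/2)
  have hexpT : (1 - α) * Γ * T / 2 = x := by
    rw [hT]; field_simp; exact div_self (ne_of_gt (by linarith))
  have hkey : M < c * Real.exp ((1 - α) * Γ * T / 2) := by
    rw [hexpT]
    have h1 : Real.log (M / c) < x := by
      have := le_max_left (Real.log (M / c)) 0
      linarith [hx]
    have h2 : M / c < Real.exp x := by
      calc M / c = Real.exp (Real.log (M / c)) := by
            rw [Real.exp_log (div_pos hM0 hc0)]
        _ < Real.exp x := Real.exp_lt_exp.mpr h1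
    calc M = (M / c) * c := by field_simp
      _ < Real.exp x * c := by
          exact mul_lt_mul_of_pos_right h2 hc0
      _ = c * Real.exp x := by ring
  have hkey2 : M * Real.exp (-Γ * T) < c * Real.exp (-(1 + α) * Γ * T / 2) := by
    have hE : (0:ℝ) < Real.exp (-Γ * T) := Real.exp_pos _
    have := mul_lt_mul_of_pos_right hkey hE
    calc M * Real.exp (-Γ * T) < c * Real.exp ((1 - α) * Γ * T / 2) * Real.exp (-Γ * T) := this
      _ = c * Real.exp (-(1 + α) * Γ * T / 2) := by
          rw [mul_assoc, ← Real.exp_add]; ring_nf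
  have hfT : f T < 0 := by
    have e1 : 16 * κ * α / (α ^ 2 - 1) = -c := by
      have h1 : α ^ 2 - 1 = -(1 - α ^ 2) := by ring
      rw [hc, h1, div_neg]
    have e2 : 1 - 8 * κ / (α - 1) = M := by
      have h1 : α - 1 = -(1 - α) := by ring
      rw [hM, h1, div_neg]; ring
    have e3 : (0:ℝ) < (8 * κ / (α + 1)) * Real.exp (-(1 + α) * Γ * T) := by
      apply mul_pos (div_pos (by linarith) hp1) (Real.exp_pos _)
    simp only [hf, e1, e2]
    nlinarith [hkey2]
  -- IVT
  have hcont : ContinuousOn f (Set.Icc 0 T) := by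
    apply Continuous.continuousOn
    fun_prop
  have hmem : (0:ℝ) ∈ Set.Ioo (f T) (f 0) := by
    constructor
    · exact hfT
    · rw [h0]; norm_num
  have := intermediate_value_Ioo' (le_of_lt hT0) hcont hmem
  obtain ⟨t, ht, hft⟩ := this
  exact ⟨t, ht.1, hft⟩
end

section
/- Let κ ∈ (0,1], Γ > 0, and α ∈ (1, 8κ+1). Define B(t) = (16κα/(α²−1)) e^{−(1+α)Γt/2} + (1 − 8κ/(α−1)) e^{−Γt} − (8κ/(α+1)) e^{−(1+α)Γt}. Then there exists t > 0 with B(t) = 0. -/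
open Real

theorem stmt9 (Γ κ α : ℝ) (hΓ : 0 < Γ) (hκ0 : 0 < κ) (hκ1 : κ ≤ 1)
    (hα1 : 1 < α) (hα2 : α < 8 * κ + 1) :
    ∃ t : ℝ, 0 < t ∧
      (16 * κ * α / (α ^ 2 - 1)) * Real.exp (-(1 + α) * Γ * t / 2) +
          (1 - 8 * κ / (α - 1)) * Real.exp (-Γ * t) -
        (8 * κ / (α + 1)) * Real.exp (-(1 + α) * Γ * t) = 0 := by
  set f : ℝ → ℝ := fun t =>
    (16 * κ * α / (α ^ 2 - 1)) * Real.exp (-(1 + α) * Γ * t / 2) +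
      (1 - 8 * κ / (α - 1)) * Real.exp (-Γ * t) -
      (8 * κ / (α + 1)) * Real.exp (-(1 + α) * Γ * t) with hf
  have hαm : 0 < α - 1 := by linarith
  have hαp : 0 < α + 1 := by linarith
  have hden : 0 < α ^ 2 - 1 := by nlinarith
  have hA : 0 < 16 * κ * α / (α ^ 2 - 1) := by positivity
  have hε : 0 < 8 * κ / (α - 1) - 1 := by
    rw [sub_pos, lt_div_iff₀ hαm]; linarith
  -- the coefficient tends to 0
  have hT : Filter.Tendsto (fun t : ℝ => (16 * κ * α / (α ^ 2 - 1)) *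
      Real.exp (-((α - 1) * Γ / 2) * t)) Filter.atTop (nhds 0) := by
    have h1 : Filter.Tendsto (fun t : ℝ => ((α - 1) * Γ / 2) * t)
        Filter.atTop Filter.atTop := by
      exact Filter.Tendsto.const_mul_atTop (by positivity) Filter.tendsto_id
    have h2 : Filter.Tendsto (fun t : ℝ => Real.exp (-(((α - 1) * Γ / 2) * t)))
        Filter.atTop (nhds 0) :=
      Real.tendsto_exp_neg_atTop_nhds_zero.comp h1
    have := h2.const_mul (16 * κ * α / (α ^ 2 - 1))
    simpa [neg_mul] using this
  have hev : ∀ᶠ t in Filter.atTop, (16 * κ * α / (α ^ 2 - 1)) *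
      Real.exp (-((α - 1) * Γ / 2) * t) < 8 * κ / (α - 1) - 1 :=
    hT.eventually_lt_const hε
  obtain ⟨t₀, ht₀1, ht₀2⟩ := (hev.and (Filter.eventually_ge_atTop 1)).exists
  have ht₀pos : 0 < t₀ := lt_of_lt_of_le one_pos ht₀2
  -- f t₀ < 0
  have hsplit : f t₀ = Real.exp (-Γ * t₀) *
      ((16 * κ * α / (α ^ 2 - 1)) * Real.exp (-((α - 1) * Γ / 2) * t₀) +
        (1 - 8 * κ / (α - 1)) - (8 * κ / (α + 1)) * Real.exp (-(α * Γ) * t₀)) := by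
    simp only [hf]
    have e1 : -(1 + α) * Γ * t₀ / 2 = -Γ * t₀ + -((α - 1) * Γ / 2) * t₀ := by ring
    have e2 : -(1 + α) * Γ * t₀ = -Γ * t₀ + -(α * Γ) * t₀ := by ring
    rw [e1, e2, Real.exp_add, Real.exp_add]; ring
  have hft₀ : f t₀ < 0 := by
    rw [hsplit]
    have h3 : 0 < (8 * κ / (α + 1)) * Real.exp (-(α * Γ) * t₀) := by positivity
    have h4 : 0 < Real.exp (-Γ * t₀) := Real.exp_pos _
    nlinarith [ht₀1]
  have hf0 : f 0 = 1 := by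
    simp only [hf, mul_zero, zero_div, Real.exp_zero, mul_one]
    field_simp
    ring
  have hcont : ContinuousOn f (Set.Icc 0 t₀) := by
    apply Continuous.continuousOn
    fun_prop
  have hmem : (0 : ℝ) ∈ Set.Icc (f t₀) (f 0) :=
    ⟨le_of_lt hft₀, by rw [hf0]; norm_num⟩
  obtain ⟨t, ht, hfteq⟩ := intermediate_value_Icc' (le_of_lt ht₀pos) hcont hmem
  refine ⟨t, ?_, hfteq⟩
  rcases lt_or_eq_of_le ht.1 with h | h
  · exact h
  · exfalso; rw [← h, hf0] at hfteq; norm_num at hfteq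
end

section
/- Let Γ > 0, κ ∈ [0,1], and ξ : [0,∞) → ℝ nonnegative continuous with ∫₀^∞ ξ² = 1. Define A(t) = κΓ e^{−Γt}(∫₀ᵗ ξ(s) e^{Γs/2} ds)² and B(t) = e^{−Γt}(1 − 4κΓ ∫₀ᵗ ξ(s) e^{Γs/2} (∫₀ˢ ξ(τ) e^{−Γτ/2} dτ) ds). Then for all t ≥ 0 at which B(t) > 0, one has Ȧ(t)B(t) − A(t)Ḃ(t) ≥ 0, i.e. A/B is nondecreasing where B > 0. -/
open MeasureTheory intervalIntegral Real

theorem stmt12 (Γ κ : ℝ) (hΓ : 0 < Γ) (hκ0 : 0 ≤ κ) (hκ1 : κ ≤ 1)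
    (ξ : ℝ → ℝ) (hξ : ∀ s, 0 ≤ s → 0 ≤ ξ s) (hcont : Continuous ξ)
    (hnorm : (∫ s in Set.Ioi (0:ℝ), ξ s ^ 2) = 1)
    (A B : ℝ → ℝ)
    (hA : A = fun t => κ * Γ * Real.exp (-Γ * t) *
      (∫ s in (0:ℝ)..t, ξ s * Real.exp (Γ * s / 2)) ^ 2)
    (hB : B = fun t => Real.exp (-Γ * t) *
      (1 - 4 * κ * Γ * ∫ s in (0:ℝ)..t,
        ξ s * Real.exp (Γ * s / 2) * ∫ τ in (0:ℝ)..s, ξ τ * Real.exp (-Γ * τ / 2))) :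
    ∀ t : ℝ, 0 ≤ t → 0 < B t →
      0 ≤ deriv A t * B t - A t * deriv B t := by
  intro t ht hBt
  set f : ℝ → ℝ := fun s => ξ s * Real.exp (Γ * s / 2) with hf
  set g : ℝ → ℝ := fun s => ξ s * Real.exp (-Γ * s / 2) with hg
  have hfc : Continuous f := hcont.mul (by continuity)
  have hgc : Continuous g := hcont.mul (by continuity)
  set I : ℝ → ℝ := fun u => ∫ s in (0:ℝ)..u, f s with hIdef
  set J : ℝ → ℝ := fun u => ∫ s in (0:ℝ)..u, g s with hJdef
  have hIder : ∀ u, HasDerivAt I (f u) u := fun u =>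
    (hfc.integral_hasStrictDerivAt 0 u).hasDerivAt
  have hJder : ∀ u, HasDerivAt J (g u) u := fun u =>
    (hgc.integral_hasStrictDerivAt 0 u).hasDerivAt
  have hJcont : Continuous J :=
    continuous_iff_continuousAt.2 fun u => (hJder u).continuousAt
  set h : ℝ → ℝ := fun s => f s * J s with hh
  have hhc : Continuous h := hfc.mul hJcont
  set K : ℝ → ℝ := fun u => ∫ s in (0:ℝ)..u, h s with hKdef
  have hKder : ∀ u, HasDerivAt K (h u) u := fun u =>
    (hhc.integral_hasStrictDerivAt 0 u).hasDerivAt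
  have hEder : HasDerivAt (fun u => Real.exp (-Γ * u)) (-Γ * Real.exp (-Γ * t)) t := by
    simpa [mul_comm] using ((hasDerivAt_id t).const_mul (-Γ)).exp
  -- derivative of A
  have hAder : HasDerivAt A
      (κ * Γ * ((-Γ * Real.exp (-Γ * t)) * (I t) ^ 2
        + Real.exp (-Γ * t) * (2 * I t * f t))) t := by
    rw [hA]
    have h1 : HasDerivAt (fun u => (I u) ^ 2) (2 * I t * f t) t := by
      simpa using ((hIder t).fun_pow 2)
    have h2 : HasDerivAt (fun u => Real.exp (-Γ * u) * (I u) ^ 2)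
        ((-Γ * Real.exp (-Γ * t)) * (I t) ^ 2 + Real.exp (-Γ * t) * (2 * I t * f t)) t :=
      hEder.mul h1
    simpa [mul_assoc] using h2.const_mul (κ * Γ)
  -- derivative of B
  have hBder : HasDerivAt B
      ((-Γ * Real.exp (-Γ * t)) * (1 - 4 * κ * Γ * K t)
        + Real.exp (-Γ * t) * (-(4 * κ * Γ * h t))) t := by
    rw [hB]
    have h1 : HasDerivAt (fun u => 1 - 4 * κ * Γ * K u) (-(4 * κ * Γ * h t)) t := by
      simpa using (((hKder t).const_mul (4 * κ * Γ)).const_sub 1)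
    exact hEder.mul h1
  have hA' : deriv A t = κ * Γ * ((-Γ * Real.exp (-Γ * t)) * (I t) ^ 2
      + Real.exp (-Γ * t) * (2 * I t * f t)) := hAder.deriv
  have hB' : deriv B t = (-Γ * Real.exp (-Γ * t)) * (1 - 4 * κ * Γ * K t)
      + Real.exp (-Γ * t) * (-(4 * κ * Γ * h t)) := hBder.deriv
  -- nonnegativity facts
  have hInn : 0 ≤ I t := by
    apply intervalIntegral.integral_nonneg ht
    intro s hs
    exact mul_nonneg (hξ s hs.1) (Real.exp_pos _).le
  have hJnn : 0 ≤ J t := by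
    apply intervalIntegral.integral_nonneg ht
    intro s hs
    exact mul_nonneg (hξ s hs.1) (Real.exp_pos _).le
  have hbnn : 0 ≤ 1 - 4 * κ * Γ * K t := by
    have hBt' : B t = Real.exp (-Γ * t) * (1 - 4 * κ * Γ * K t) := by rw [hB]
    nlinarith [Real.exp_pos (-Γ * t), hBt]
  have hξt : 0 ≤ ξ t := hξ t ht
  have key : deriv A t * B t - A t * deriv B t
      = κ * Γ * ξ t * Real.exp (Γ * t / 2) * (Real.exp (-Γ * t)) ^ 2
        * (2 * I t * (1 - 4 * κ * Γ * K t) + 4 * κ * Γ * J t * (I t) ^ 2) := by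
    rw [hA', hB', hA, hB]
    show _ * (Real.exp (-Γ * t) * (1 - 4 * κ * Γ * K t))
        - κ * Γ * Real.exp (-Γ * t) * (I t) ^ 2 * _ = _
    simp only [hh, hf, hg]
    ring
  rw [key]
  have h1 : 0 ≤ 2 * I t * (1 - 4 * κ * Γ * K t) + 4 * κ * Γ * J t * (I t) ^ 2 := by
    have := sq_nonneg (I t)
    positivity
  positivity
end

section
/- Let Γ > 0, κ ∈ [0,1], and ξ : [0,∞) → ℝ nonnegative continuous. Define C(t) = e^{−Γt/2}(1 − 2κΓ ∫₀ᵗ ξ(s) e^{−Γs/2} (∫₀ˢ ξ(τ) e^{Γτ/2} dτ) ds) and B(t) = e^{−Γt}(1 − 4κΓ ∫₀ᵗ ξ(s) e^{Γs/2} (∫₀ˢ ξ(τ) e^{−Γτ/2} dτ) ds). If B(t) > 0 for all t ≥ 0, then C(t) > 0 for all t ≥ 0. -/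
open MeasureTheory intervalIntegral Real

theorem stmt13 (Γ κ : ℝ) (hΓ : 0 < Γ) (hκ0 : 0 ≤ κ) (hκ1 : κ ≤ 1)
    (ξ : ℝ → ℝ) (hξ : ∀ s, 0 ≤ s → 0 ≤ ξ s) (hcont : Continuous ξ)
    (C B : ℝ → ℝ)
    (hC : C = fun t => Real.exp (-Γ * t / 2) *
      (1 - 2 * κ * Γ * ∫ s in (0:ℝ)..t,
        ξ s * Real.exp (-Γ * s / 2) * ∫ τ in (0:ℝ)..s, ξ τ * Real.exp (Γ * τ / 2)))
    (hB : B = fun t => Real.exp (-Γ * t) *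
      (1 - 4 * κ * Γ * ∫ s in (0:ℝ)..t,
        ξ s * Real.exp (Γ * s / 2) * ∫ τ in (0:ℝ)..s, ξ τ * Real.exp (-Γ * τ / 2)))
    (hBpos : ∀ t : ℝ, 0 ≤ t → 0 < B t) :
    ∀ t : ℝ, 0 ≤ t → 0 < C t := by
  subst hC hB
  intro t ht
  have hce : ∀ c : ℝ, Continuous fun τ : ℝ => Real.exp (c * τ / 2) := fun c =>
    Real.continuous_exp.comp ((continuous_const.mul continuous_id).div_const 2)
  -- continuity of inner primitives
  have hcontF : Continuous fun s => ∫ τ in (0:ℝ)..s, ξ τ * Real.exp (-Γ * τ / 2) :=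
    intervalIntegral.continuous_primitive
      (fun a b => (hcont.mul (hce (-Γ))).intervalIntegrable a b) 0
  have hcontG : Continuous fun s => ∫ τ in (0:ℝ)..s, ξ τ * Real.exp (Γ * τ / 2) :=
    intervalIntegral.continuous_primitive
      (fun a b => (hcont.mul (hce Γ)).intervalIntegrable a b) 0
  set I : ℝ := ∫ s in (0:ℝ)..t,
      ξ s * Real.exp (-Γ * s / 2) * ∫ τ in (0:ℝ)..s, ξ τ * Real.exp (Γ * τ / 2) with hI
  set J : ℝ := ∫ s in (0:ℝ)..t,
      ξ s * Real.exp (Γ * s / 2) * ∫ τ in (0:ℝ)..s, ξ τ * Real.exp (-Γ * τ / 2) with hJ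
  -- from B positivity
  have hBt := hBpos t ht
  simp only at hBt
  have hJlt : 4 * κ * Γ * J < 1 := by
    have hexp : 0 < Real.exp (-Γ * t) := Real.exp_pos _
    nlinarith [mul_pos_iff.mp hBt]
  -- J ≥ 0
  have hJ0 : 0 ≤ J := by
    apply intervalIntegral.integral_nonneg ht
    intro s hs
    have hs0 : 0 ≤ s := hs.1
    have hFnn : 0 ≤ ∫ τ in (0:ℝ)..s, ξ τ * Real.exp (-Γ * τ / 2) := by
      apply intervalIntegral.integral_nonneg hs0
      intro τ hτ
      exact mul_nonneg (hξ τ hτ.1) (Real.exp_pos _).le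
    exact mul_nonneg (mul_nonneg (hξ s hs0) (Real.exp_pos _).le) hFnn
  -- pointwise: I's integrand ≤ J's integrand
  have hIJ : I ≤ J := by
    apply intervalIntegral.integral_mono_on ht
    · exact ((hcont.mul (hce (-Γ))).mul hcontG).intervalIntegrable 0 t
    · exact ((hcont.mul (hce Γ)).mul hcontF).intervalIntegrable 0 t
    intro s hs
    have hs0 : 0 ≤ s := hs.1
    have key : (∫ τ in (0:ℝ)..s, ξ τ * Real.exp (Γ * τ / 2))
        ≤ Real.exp (Γ * s) * ∫ τ in (0:ℝ)..s, ξ τ * Real.exp (-Γ * τ / 2) := by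
      rw [← intervalIntegral.integral_const_mul]
      apply intervalIntegral.integral_mono_on hs0
      · exact (hcont.mul (hce Γ)).intervalIntegrable 0 s
      · exact (continuous_const.mul (hcont.mul (hce (-Γ)))).intervalIntegrable 0 s
      intro τ hτ
      have h1 : Real.exp (Γ * τ / 2) ≤ Real.exp (Γ * s) * Real.exp (-Γ * τ / 2) := by
        rw [← Real.exp_add]
        apply Real.exp_le_exp.mpr
        nlinarith [hτ.2, hΓ.le]
      calc ξ τ * Real.exp (Γ * τ / 2)
          ≤ ξ τ * (Real.exp (Γ * s) * Real.exp (-Γ * τ / 2)) :=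
            mul_le_mul_of_nonneg_left h1 (hξ τ hτ.1)
        _ = Real.exp (Γ * s) * (ξ τ * Real.exp (-Γ * τ / 2)) := by ring
    have h2 : Real.exp (-Γ * s / 2) * (∫ τ in (0:ℝ)..s, ξ τ * Real.exp (Γ * τ / 2))
        ≤ Real.exp (Γ * s / 2) * ∫ τ in (0:ℝ)..s, ξ τ * Real.exp (-Γ * τ / 2) := by
      have := mul_le_mul_of_nonneg_left key (Real.exp_pos (-Γ * s / 2)).le
      calc Real.exp (-Γ * s / 2) * (∫ τ in (0:ℝ)..s, ξ τ * Real.exp (Γ * τ / 2))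
          ≤ Real.exp (-Γ * s / 2) * (Real.exp (Γ * s) *
              ∫ τ in (0:ℝ)..s, ξ τ * Real.exp (-Γ * τ / 2)) := this
        _ = (Real.exp (-Γ * s / 2) * Real.exp (Γ * s)) *
              ∫ τ in (0:ℝ)..s, ξ τ * Real.exp (-Γ * τ / 2) := by ring
        _ = Real.exp (Γ * s / 2) * ∫ τ in (0:ℝ)..s, ξ τ * Real.exp (-Γ * τ / 2) := by
            rw [← Real.exp_add]; ring_nf
    calc ξ s * Real.exp (-Γ * s / 2) * ∫ τ in (0:ℝ)..s, ξ τ * Real.exp (Γ * τ / 2)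
        = ξ s * (Real.exp (-Γ * s / 2) * ∫ τ in (0:ℝ)..s, ξ τ * Real.exp (Γ * τ / 2)) := by
          ring
      _ ≤ ξ s * (Real.exp (Γ * s / 2) * ∫ τ in (0:ℝ)..s, ξ τ * Real.exp (-Γ * τ / 2)) :=
          mul_le_mul_of_nonneg_left h2 (hξ s hs0)
      _ = ξ s * Real.exp (Γ * s / 2) * ∫ τ in (0:ℝ)..s, ξ τ * Real.exp (-Γ * τ / 2) := by
          ring
  -- conclude
  have hκΓ : 0 ≤ κ * Γ := mul_nonneg hκ0 hΓ.le
  have hIlt : 2 * κ * Γ * I < 1 := by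
    nlinarith [mul_le_mul_of_nonneg_left hIJ hκΓ, mul_nonneg hκΓ hJ0]
  have : (0:ℝ) < 1 - 2 * κ * Γ * I := by linarith
  exact mul_pos (Real.exp_pos _) this
end

section
/- Under the hypotheses of the previous statement (resonance, ξ ≥ 0, B(t) > 0 for all t ≥ 0, hence C(t) > 0), the coherence eigenvalue C satisfies Ċ(t) = −(Γ/2)C(t) − 2κΓ e^{−Γt} ξ(t) ∫₀ᵗ ξ(s) e^{Γs/2} ds < 0 for all t > 0 where ξ(t) > 0, and in general Ċ(t) ≤ −(Γ/2)C(t) < 0; hence C is strictly decreasing. -/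
open MeasureTheory intervalIntegral Real

theorem stmt14 (Γ κ : ℝ) (hΓ : 0 < Γ) (hκ0 : 0 ≤ κ) (hκ1 : κ ≤ 1)
    (ξ : ℝ → ℝ) (hξ : ∀ s, 0 ≤ s → 0 ≤ ξ s) (hcont : Continuous ξ)
    (C B : ℝ → ℝ)
    (hC : C = fun t => Real.exp (-Γ * t / 2) *
      (1 - 2 * κ * Γ * ∫ s in (0:ℝ)..t,
        ξ s * Real.exp (-Γ * s / 2) * ∫ τ in (0:ℝ)..s, ξ τ * Real.exp (Γ * τ / 2)))
    (hB : B = fun t => Real.exp (-Γ * t) *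
      (1 - 4 * κ * Γ * ∫ s in (0:ℝ)..t,
        ξ s * Real.exp (Γ * s / 2) * ∫ τ in (0:ℝ)..s, ξ τ * Real.exp (-Γ * τ / 2)))
    (hBpos : ∀ t : ℝ, 0 ≤ t → 0 < B t)
    (hCpos : ∀ t : ℝ, 0 ≤ t → 0 < C t) :
    (∀ t : ℝ, 0 ≤ t →
        deriv C t = -(Γ / 2) * C t -
            2 * κ * Γ * Real.exp (-Γ * t) * ξ t *
              ∫ s in (0:ℝ)..t, ξ s * Real.exp (Γ * s / 2) ∧
          deriv C t ≤ -(Γ / 2) * C t ∧ -(Γ / 2) * C t < 0) ∧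
      StrictAntiOn C (Set.Ici 0) := by
  -- continuity of inner integrand and inner integral
  set G : ℝ → ℝ := fun s => ∫ τ in (0:ℝ)..s, ξ τ * Real.exp (Γ * τ / 2) with hG
  have hcont1 : Continuous fun τ => ξ τ * Real.exp (Γ * τ / 2) := by
    exact hcont.mul ((continuous_const.mul continuous_id).div_const 2).rexp
  have hGcont : Continuous G :=
    intervalIntegral.continuous_primitive (fun a b => hcont1.intervalIntegrable a b) 0
  have hcontg : Continuous fun s => ξ s * Real.exp (-Γ * s / 2) * G s := by
    exact (hcont.mul ((continuous_const.mul continuous_id).div_const 2).rexp).mul hGcont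
  -- derivative of C at every point t
  have hderiv : ∀ t : ℝ, HasDerivAt C
      (-(Γ / 2) * C t - 2 * κ * Γ * Real.exp (-Γ * t) * ξ t * G t) t := by
    intro t
    have hF : HasDerivAt (fun t => ∫ s in (0:ℝ)..t, ξ s * Real.exp (-Γ * s / 2) * G s)
        (ξ t * Real.exp (-Γ * t / 2) * G t) t :=
      intervalIntegral.integral_hasDerivAt_right (hcontg.intervalIntegrable 0 t)
        (hcontg.stronglyMeasurableAtFilter _ _) hcontg.continuousAt
    have he : HasDerivAt (fun t : ℝ => Real.exp (-Γ * t / 2))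
        (-(Γ / 2) * Real.exp (-Γ * t / 2)) t := by
      have h1 : HasDerivAt (fun t : ℝ => -Γ * t / 2) (-(Γ / 2)) t := by
        simpa [neg_div] using ((hasDerivAt_id t).const_mul (-Γ)).div_const 2
      simpa [mul_comm] using h1.exp
    have := he.mul ((hF.const_mul (2 * κ * Γ)).const_sub 1)
    rw [hC]
    refine this.congr_deriv ?_
    have hexp : Real.exp (-Γ * t) = Real.exp (-Γ * t / 2) * Real.exp (-Γ * t / 2) := by
      rw [← Real.exp_add]; ring_nf
    rw [hexp]; ring
  refine ⟨fun t ht => ?_, ?_⟩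
  · have hd := (hderiv t).deriv
    have hnn : 0 ≤ 2 * κ * Γ * Real.exp (-Γ * t) * ξ t * G t := by
      have hGnn : 0 ≤ G t := by
        rw [hG]
        apply intervalIntegral.integral_nonneg ht
        intro τ hτ
        exact mul_nonneg (hξ τ hτ.1) (Real.exp_pos _).le
      exact mul_nonneg (mul_nonneg (by positivity) (hξ t ht)) hGnn
    exact ⟨hd, by rw [hd]; linarith, by nlinarith [hCpos t ht]⟩
  · apply strictAntiOn_of_deriv_neg (convex_Ici 0)
    · exact fun x _ => ((hderiv x).differentiableAt.continuousAt).continuousWithinAt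
    · intro x hx
      rw [interior_Ici] at hx
      have hd := (hderiv x).deriv
      have hnn : 0 ≤ 2 * κ * Γ * Real.exp (-Γ * x) * ξ x * G x := by
        have hGnn : 0 ≤ G x := by
          rw [hG]
          apply intervalIntegral.integral_nonneg hx.le
          intro τ hτ
          exact mul_nonneg (hξ τ hτ.1) (Real.exp_pos _).le
        exact mul_nonneg (mul_nonneg (by positivity) (hξ x hx.le)) hGnn
      have := hCpos x hx.le
      rw [hd]; nlinarith
end

section
/- Let Γ > 0, κ ∈ [0,1], ξ : [0,∞) → ℝ nonnegative continuous, and suppose B(t) > 0 for all t ≥ 0, where B(t) = e^{−Γt}(1 − 4κΓ ∫₀ᵗ ξ(s)e^{Γs/2}(∫₀ˢ ξ(τ)e^{−Γτ/2}dτ)ds). Then the dephasing rate γ_z(t) = (1/2)Ḃ(t)/B(t) − Ċ(t)/C(t) satisfies γ_z(t) ≤ 0 for all t ≥ 0, where C(t) = e^{−Γt/2}(1 − 2κΓ ∫₀ᵗ ξ(s)e^{−Γs/2}(∫₀ˢ ξ(τ)e^{Γτ/2}dτ)ds). -/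
open MeasureTheory intervalIntegral Real

theorem stmt17 (Γ κ : ℝ) (hΓ : 0 < Γ) (hκ0 : 0 ≤ κ) (hκ1 : κ ≤ 1)
    (ξ : ℝ → ℝ) (hξ : ∀ s, 0 ≤ s → 0 ≤ ξ s) (hcont : Continuous ξ)
    (B C : ℝ → ℝ)
    (hB : B = fun t => Real.exp (-Γ * t) *
      (1 - 4 * κ * Γ * ∫ s in (0:ℝ)..t,
        ξ s * Real.exp (Γ * s / 2) * ∫ τ in (0:ℝ)..s, ξ τ * Real.exp (-Γ * τ / 2)))
    (hC : C = fun t => Real.exp (-Γ * t / 2) *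
      (1 - 2 * κ * Γ * ∫ s in (0:ℝ)..t,
        ξ s * Real.exp (-Γ * s / 2) * ∫ τ in (0:ℝ)..s, ξ τ * Real.exp (Γ * τ / 2)))
    (hBpos : ∀ t : ℝ, 0 ≤ t → 0 < B t) :
    ∀ t : ℝ, 0 ≤ t →
      (1 / 2) * deriv B t / B t - deriv C t / C t ≤ 0 := by
  -- auxiliary functions
  set Q : ℝ → ℝ := fun s => ∫ τ in (0:ℝ)..s, ξ τ * Real.exp (-Γ * τ / 2) with hQdef
  set P : ℝ → ℝ := fun s => ∫ τ in (0:ℝ)..s, ξ τ * Real.exp (Γ * τ / 2) with hPdef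
  have cξm : Continuous fun τ => ξ τ * Real.exp (-Γ * τ / 2) := by fun_prop
  have cξp : Continuous fun τ => ξ τ * Real.exp (Γ * τ / 2) := by fun_prop
  have hQcont : Continuous Q :=
    intervalIntegral.continuous_primitive (fun a b => cξm.intervalIntegrable a b) 0
  have hPcont : Continuous P :=
    intervalIntegral.continuous_primitive (fun a b => cξp.intervalIntegrable a b) 0
  set J : ℝ → ℝ := fun t => ∫ s in (0:ℝ)..t, ξ s * Real.exp (Γ * s / 2) * Q s with hJdef
  set I : ℝ → ℝ := fun t => ∫ s in (0:ℝ)..t, ξ s * Real.exp (-Γ * s / 2) * P s with hIdef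
  have cJint : Continuous fun s => ξ s * Real.exp (Γ * s / 2) * Q s := by fun_prop
  have cIint : Continuous fun s => ξ s * Real.exp (-Γ * s / 2) * P s := by fun_prop
  have hBeq : ∀ t, B t = Real.exp (-Γ * t) * (1 - 4 * κ * Γ * J t) := fun t => by rw [hB]
  have hCeq : ∀ t, C t = Real.exp (-Γ * t / 2) * (1 - 2 * κ * Γ * I t) := fun t => by rw [hC]
  -- derivatives
  have hBd : ∀ t, HasDerivAt B
      (-Γ * Real.exp (-Γ * t) * (1 - 4 * κ * Γ * J t)
        + Real.exp (-Γ * t) * (-(4 * κ * Γ * (ξ t * Real.exp (Γ * t / 2) * Q t)))) t := by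
    intro t
    rw [hB]
    have h1 : HasDerivAt (fun t : ℝ => Real.exp (-Γ * t)) (-Γ * Real.exp (-Γ * t)) t := by
      have := ((hasDerivAt_id t).const_mul (-Γ)).exp
      simpa [mul_comm] using this
    have h2 : HasDerivAt J (ξ t * Real.exp (Γ * t / 2) * Q t) t :=
      (cJint.integral_hasStrictDerivAt 0 t).hasDerivAt
    have h3 : HasDerivAt (fun t : ℝ => 1 - 4 * κ * Γ * J t)
        (-(4 * κ * Γ * (ξ t * Real.exp (Γ * t / 2) * Q t))) t := by
      simpa using ((h2.const_mul (4 * κ * Γ)).const_sub 1)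
    exact h1.mul h3
  have hCd : ∀ t, HasDerivAt C
      (-Γ / 2 * Real.exp (-Γ * t / 2) * (1 - 2 * κ * Γ * I t)
        + Real.exp (-Γ * t / 2) * (-(2 * κ * Γ * (ξ t * Real.exp (-Γ * t / 2) * P t)))) t := by
    intro t
    rw [hC]
    have h1 : HasDerivAt (fun t : ℝ => Real.exp (-Γ * t / 2)) (-Γ / 2 * Real.exp (-Γ * t / 2)) t := by
      have h0 := (((hasDerivAt_id t).const_mul (-Γ)).div_const 2).exp
      simp only [id_eq, mul_one] at h0
      have : Real.exp (-Γ * t / 2) * (-Γ / 2) = -Γ / 2 * Real.exp (-Γ * t / 2) := by ring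
      rw [show -Γ * t / 2 = -Γ * t / 2 from rfl] at h0
      simpa [mul_comm, mul_div_assoc] using h0
    have h2 : HasDerivAt I (ξ t * Real.exp (-Γ * t / 2) * P t) t :=
      (cIint.integral_hasStrictDerivAt 0 t).hasDerivAt
    have h3 : HasDerivAt (fun t : ℝ => 1 - 2 * κ * Γ * I t)
        (-(2 * κ * Γ * (ξ t * Real.exp (-Γ * t / 2) * P t))) t := by
      simpa using ((h2.const_mul (2 * κ * Γ)).const_sub 1)
    exact h1.mul h3
  intro t ht
  -- nonnegativity of inner integrals
  have hQ0 : ∀ s, 0 ≤ s → 0 ≤ Q s := fun s hs =>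
    intervalIntegral.integral_nonneg hs
      (fun τ hτ => mul_nonneg (hξ τ hτ.1) (Real.exp_pos _).le)
  have hP0 : ∀ s, 0 ≤ s → 0 ≤ P s := fun s hs =>
    intervalIntegral.integral_nonneg hs
      (fun τ hτ => mul_nonneg (hξ τ hτ.1) (Real.exp_pos _).le)
  have hJ0 : 0 ≤ J t :=
    intervalIntegral.integral_nonneg ht (fun s hs =>
      mul_nonneg (mul_nonneg (hξ s hs.1) (Real.exp_pos _).le) (hQ0 s hs.1))
  -- pointwise comparison : exp(-Γs/2) P s ≤ exp(Γs/2) Q s for s ≥ 0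
  have hPQ : ∀ s, 0 ≤ s → Real.exp (-Γ * s / 2) * P s ≤ Real.exp (Γ * s / 2) * Q s := by
    intro s hs
    have hl : Real.exp (-Γ * s / 2) * P s
        = ∫ τ in (0:ℝ)..s, Real.exp (-Γ * s / 2) * (ξ τ * Real.exp (Γ * τ / 2)) := by
      rw [hPdef, ← intervalIntegral.integral_const_mul]
    have hr : Real.exp (Γ * s / 2) * Q s
        = ∫ τ in (0:ℝ)..s, Real.exp (Γ * s / 2) * (ξ τ * Real.exp (-Γ * τ / 2)) := by
      rw [hQdef, ← intervalIntegral.integral_const_mul]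
    rw [hl, hr]
    refine intervalIntegral.integral_mono_on hs
      ((continuous_const.mul cξp).intervalIntegrable _ _)
      ((continuous_const.mul cξm).intervalIntegrable _ _) ?_
    intro τ hτ
    have hτs : τ ≤ s := hτ.2
    have : Real.exp (-Γ * s / 2) * Real.exp (Γ * τ / 2)
        ≤ Real.exp (Γ * s / 2) * Real.exp (-Γ * τ / 2) := by
      rw [← Real.exp_add, ← Real.exp_add]
      apply Real.exp_le_exp.mpr
      nlinarith [hΓ]
    calc Real.exp (-Γ * s / 2) * (ξ τ * Real.exp (Γ * τ / 2))
        = ξ τ * (Real.exp (-Γ * s / 2) * Real.exp (Γ * τ / 2)) := by ring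
      _ ≤ ξ τ * (Real.exp (Γ * s / 2) * Real.exp (-Γ * τ / 2)) :=
          mul_le_mul_of_nonneg_left this (hξ τ hτ.1)
      _ = Real.exp (Γ * s / 2) * (ξ τ * Real.exp (-Γ * τ / 2)) := by ring
  -- I t ≤ J t
  have hIJ : I t ≤ J t := by
    refine intervalIntegral.integral_mono_on ht (cIint.intervalIntegrable _ _)
      (cJint.intervalIntegrable _ _) ?_
    intro s hs
    have h := hPQ s hs.1
    calc ξ s * Real.exp (-Γ * s / 2) * P s = ξ s * (Real.exp (-Γ * s / 2) * P s) := by ring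
      _ ≤ ξ s * (Real.exp (Γ * s / 2) * Q s) := mul_le_mul_of_nonneg_left h (hξ s hs.1)
      _ = ξ s * Real.exp (Γ * s / 2) * Q s := by ring
  -- exp(-Γ t) P t ≤ Q t
  have hPB : Real.exp (-Γ * t) * P t ≤ Q t := by
    have hl : Real.exp (-Γ * t) * P t
        = ∫ τ in (0:ℝ)..t, Real.exp (-Γ * t) * (ξ τ * Real.exp (Γ * τ / 2)) := by
      rw [hPdef, ← intervalIntegral.integral_const_mul]
    rw [hl, hQdef]
    refine intervalIntegral.integral_mono_on ht
      ((continuous_const.mul cξp).intervalIntegrable _ _) (cξm.intervalIntegrable _ _) ?_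
    intro τ hτ
    have : Real.exp (-Γ * t) * Real.exp (Γ * τ / 2) ≤ Real.exp (-Γ * τ / 2) := by
      rw [← Real.exp_add]
      apply Real.exp_le_exp.mpr
      nlinarith [hτ.2, hΓ]
    calc Real.exp (-Γ * t) * (ξ τ * Real.exp (Γ * τ / 2))
        = ξ τ * (Real.exp (-Γ * t) * Real.exp (Γ * τ / 2)) := by ring
      _ ≤ ξ τ * Real.exp (-Γ * τ / 2) := mul_le_mul_of_nonneg_left this (hξ τ hτ.1)
  -- positivity of the bracket factors
  have ha : 0 < 1 - 4 * κ * Γ * J t := by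
    have := hBpos t ht
    rw [hBeq t] at this
    nlinarith [Real.exp_pos (-Γ * t), this]
  have hκΓ : 0 ≤ κ * Γ := mul_nonneg hκ0 hΓ.le
  have hab : 1 - 4 * κ * Γ * J t ≤ 1 - 2 * κ * Γ * I t := by nlinarith
  have hb : 0 < 1 - 2 * κ * Γ * I t := lt_of_lt_of_le ha hab
  -- key inequality
  have hx : 0 ≤ ξ t := hξ t ht
  have hE : Real.exp (-Γ * t / 2) = Real.exp (Γ * t / 2) * Real.exp (-Γ * t) := by
    rw [← Real.exp_add]; ring_nf
  have key : Real.exp (-Γ * t / 2) * P t * (1 - 4 * κ * Γ * J t)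
      ≤ Real.exp (Γ * t / 2) * Q t * (1 - 2 * κ * Γ * I t) := by
    have h1 : Real.exp (-Γ * t) * P t * (1 - 4 * κ * Γ * J t)
        ≤ Q t * (1 - 4 * κ * Γ * J t) := mul_le_mul_of_nonneg_right hPB ha.le
    have h2 : Q t * (1 - 4 * κ * Γ * J t) ≤ Q t * (1 - 2 * κ * Γ * I t) :=
      mul_le_mul_of_nonneg_left hab (hQ0 t ht)
    have h3 := (h1.trans h2)
    calc Real.exp (-Γ * t / 2) * P t * (1 - 4 * κ * Γ * J t)
        = Real.exp (Γ * t / 2) * (Real.exp (-Γ * t) * P t * (1 - 4 * κ * Γ * J t)) := by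
          rw [hE]; ring
      _ ≤ Real.exp (Γ * t / 2) * (Q t * (1 - 2 * κ * Γ * I t)) :=
          mul_le_mul_of_nonneg_left h3 (Real.exp_pos _).le
      _ = Real.exp (Γ * t / 2) * Q t * (1 - 2 * κ * Γ * I t) := by ring
  -- assemble
  have dB := (hBd t).deriv
  have dC := (hCd t).deriv
  rw [dB, dC, hBeq t, hCeq t]
  have hea : Real.exp (-Γ * t) ≠ 0 := (Real.exp_pos _).ne'
  have heb : Real.exp (-Γ * t / 2) ≠ 0 := (Real.exp_pos _).ne'
  have hane : (1 - 4 * κ * Γ * J t) ≠ 0 := ha.ne'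
  have hbne : (1 - 2 * κ * Γ * I t) ≠ 0 := hb.ne'
  have heq : (1 / 2) * (-Γ * Real.exp (-Γ * t) * (1 - 4 * κ * Γ * J t)
        + Real.exp (-Γ * t) * (-(4 * κ * Γ * (ξ t * Real.exp (Γ * t / 2) * Q t))))
        / (Real.exp (-Γ * t) * (1 - 4 * κ * Γ * J t))
      - (-Γ / 2 * Real.exp (-Γ * t / 2) * (1 - 2 * κ * Γ * I t)
        + Real.exp (-Γ * t / 2) * (-(2 * κ * Γ * (ξ t * Real.exp (-Γ * t / 2) * P t))))
        / (Real.exp (-Γ * t / 2) * (1 - 2 * κ * Γ * I t))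
      = (2 * κ * Γ * ξ t) *
        (Real.exp (-Γ * t / 2) * P t / (1 - 2 * κ * Γ * I t)
          - Real.exp (Γ * t / 2) * Q t / (1 - 4 * κ * Γ * J t)) := by
    rw [div_sub_div _ _ (mul_ne_zero hea hane) (mul_ne_zero heb hbne), div_sub_div _ _ hbne hane,
      mul_div_assoc', div_eq_div_iff (mul_ne_zero (mul_ne_zero hea hane) (mul_ne_zero heb hbne)) (mul_ne_zero hbne hane)]
    ring
  rw [heq]
  apply mul_nonpos_of_nonneg_of_nonpos
  · positivity
  · rw [sub_nonpos, div_le_div_iff₀ hb ha]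
    exact key
end

section
/- Let Γ > 0, κ ∈ [0,1], ξ nonnegative continuous, at resonance, with B(t) > 0 for all t. Then γ₊(t) + γ₋(t) = −2Ḃ(t)/B(t) ≥ 0 and γ₊(t) + γ₋(t) + 4γ_z(t) = −4Ċ(t)/C(t) ≥ 0 for all t ≥ 0, i.e. the BLP conditions for no information backflow hold. -/
open MeasureTheory intervalIntegral Real

private lemma primitive_hasDerivAt {f : ℝ → ℝ} (hf : Continuous f) (t : ℝ) :
    HasDerivAt (fun x => ∫ s in (0:ℝ)..x, f s) (f t) t :=
  (hf.integral_hasStrictDerivAt 0 t).hasDerivAt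

private lemma primitive_continuous {f : ℝ → ℝ} (hf : Continuous f) :
    Continuous (fun x => ∫ s in (0:ℝ)..x, f s) := by
  exact continuous_iff_continuousAt.mpr fun t =>
    ((primitive_hasDerivAt hf t).differentiableAt).continuousAt

theorem stmt18 (Γ κ : ℝ) (hΓ : 0 < Γ) (hκ0 : 0 ≤ κ) (hκ1 : κ ≤ 1)
    (ξ : ℝ → ℝ) (hξ : ∀ s, 0 ≤ s → 0 ≤ ξ s) (hcont : Continuous ξ)
    (B C : ℝ → ℝ)
    (hB : B = fun t => Real.exp (-Γ * t) *
      (1 - 4 * κ * Γ * ∫ s in (0:ℝ)..t,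
        ξ s * Real.exp (Γ * s / 2) * ∫ τ in (0:ℝ)..s, ξ τ * Real.exp (-Γ * τ / 2)))
    (hC : C = fun t => Real.exp (-Γ * t / 2) *
      (1 - 2 * κ * Γ * ∫ s in (0:ℝ)..t,
        ξ s * Real.exp (-Γ * s / 2) * ∫ τ in (0:ℝ)..s, ξ τ * Real.exp (Γ * τ / 2)))
    (hBpos : ∀ t : ℝ, 0 ≤ t → 0 < B t) :
    ∀ t : ℝ, 0 ≤ t →
      0 ≤ -2 * deriv B t / B t ∧ 0 ≤ -4 * deriv C t / C t := by
  -- basic continuous functions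
  set v : ℝ → ℝ := fun x => ∫ τ in (0:ℝ)..x, ξ τ * Real.exp (-Γ * τ / 2) with hv
  set u : ℝ → ℝ := fun x => ∫ τ in (0:ℝ)..x, ξ τ * Real.exp (Γ * τ / 2) with hu
  have hcv : Continuous (fun τ => ξ τ * Real.exp (-Γ * τ / 2)) := by continuity
  have hcu : Continuous (fun τ => ξ τ * Real.exp (Γ * τ / 2)) := by continuity
  have hvc : Continuous v := primitive_continuous hcv
  have huc : Continuous u := primitive_continuous hcu
  have hgB : Continuous (fun s => ξ s * Real.exp (Γ * s / 2) * v s) := by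
    exact (hcu.mul hvc)
  have hgC : Continuous (fun s => ξ s * Real.exp (-Γ * s / 2) * u s) := by
    exact (hcv.mul huc)
  -- nonnegativity of u, v on [0,∞)
  have hv0 : ∀ t, 0 ≤ t → 0 ≤ v t := by
    intro t ht
    apply intervalIntegral.integral_nonneg ht
    intro τ hτ
    exact mul_nonneg (hξ τ hτ.1) (Real.exp_nonneg _)
  have hu0 : ∀ t, 0 ≤ t → 0 ≤ u t := by
    intro t ht
    apply intervalIntegral.integral_nonneg ht
    intro τ hτ
    exact mul_nonneg (hξ τ hτ.1) (Real.exp_nonneg _)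
  -- derivative of B
  have hBd : ∀ t : ℝ, HasDerivAt B
      (-Γ * B t - 4 * κ * Γ * (ξ t * Real.exp (-Γ * t / 2) * v t)) t := by
    intro t
    have h1 : HasDerivAt (fun x : ℝ => Real.exp (-Γ * x)) (-Γ * Real.exp (-Γ * t)) t := by
      have h := (Real.hasDerivAt_exp (-Γ * t)).comp t ((hasDerivAt_id t).const_mul (-Γ))
      simp only [Function.comp_def, id_eq] at h
      refine h.congr_deriv ?_
      ring
    have h2 : HasDerivAt (fun x : ℝ => 1 - 4 * κ * Γ * ∫ s in (0:ℝ)..x,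
        ξ s * Real.exp (Γ * s / 2) * v s)
        (-(4 * κ * Γ * (ξ t * Real.exp (Γ * t / 2) * v t))) t := by
      have := ((primitive_hasDerivAt hgB t).const_mul (4 * κ * Γ)).const_sub 1
      simpa using this
    have := h1.mul h2
    rw [hB]
    refine this.congr_deriv ?_
    have he : Real.exp (-Γ * t / 2) = Real.exp (-Γ * t) * Real.exp (Γ * t / 2) := by
      rw [← Real.exp_add]; ring_nf
    simp only [hB, he]
    ring
  -- derivative of C
  have hCd : ∀ t : ℝ, HasDerivAt C
      (-(Γ/2) * C t - 2 * κ * Γ * (ξ t * Real.exp (-Γ * t) * u t)) t := by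
    intro t
    have h1 : HasDerivAt (fun x : ℝ => Real.exp (-Γ * x / 2))
        (-(Γ/2) * Real.exp (-Γ * t / 2)) t := by
      have h := (Real.hasDerivAt_exp (-Γ * t / 2)).comp t
        (((hasDerivAt_id t).const_mul (-Γ)).div_const 2)
      simp only [Function.comp_def, id_eq] at h
      refine h.congr_deriv ?_
      ring
    have h2 : HasDerivAt (fun x : ℝ => 1 - 2 * κ * Γ * ∫ s in (0:ℝ)..x,
        ξ s * Real.exp (-Γ * s / 2) * u s)
        (-(2 * κ * Γ * (ξ t * Real.exp (-Γ * t / 2) * u t))) t := by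
      have := ((primitive_hasDerivAt hgC t).const_mul (2 * κ * Γ)).const_sub 1
      simpa using this
    have := h1.mul h2
    rw [hC]
    refine this.congr_deriv ?_
    have he : Real.exp (-Γ * t) = Real.exp (-Γ * t / 2) * Real.exp (-Γ * t / 2) := by
      rw [← Real.exp_add]; ring_nf
    simp only [hC, he]
    ring
  -- positivity of C on [0,∞)
  have hQP : ∀ t : ℝ, 0 ≤ t →
      (∫ s in (0:ℝ)..t, ξ s * Real.exp (-Γ * s / 2) * u s) ≤
      (∫ s in (0:ℝ)..t, ξ s * Real.exp (Γ * s / 2) * v s) := by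
    intro t ht
    apply intervalIntegral.integral_mono_on ht
      (hgC.intervalIntegrable 0 t) (hgB.intervalIntegrable 0 t)
    intro s hs
    have hsd : Real.exp (-Γ * s / 2) * u s ≤ Real.exp (Γ * s / 2) * v s := by
      have e1 : Real.exp (-Γ * s / 2) * u s
          = ∫ τ in (0:ℝ)..s, Real.exp (-Γ * s / 2) * (ξ τ * Real.exp (Γ * τ / 2)) := by
        rw [intervalIntegral.integral_const_mul]
      have e2 : Real.exp (Γ * s / 2) * v s
          = ∫ τ in (0:ℝ)..s, Real.exp (Γ * s / 2) * (ξ τ * Real.exp (-Γ * τ / 2)) := by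
        rw [intervalIntegral.integral_const_mul]
      rw [e1, e2]
      apply intervalIntegral.integral_mono_on hs.1
        (((continuous_const.mul hcu)).intervalIntegrable 0 s)
        (((continuous_const.mul hcv)).intervalIntegrable 0 s)
      intro τ hτ
      have h1 : Real.exp (-Γ * s / 2) * (ξ τ * Real.exp (Γ * τ / 2))
          = ξ τ * Real.exp (-Γ * (s - τ) / 2) := by
        rw [mul_comm (Real.exp (-Γ * s / 2)), mul_assoc, ← Real.exp_add]
        congr 2
        ring
      have h2 : Real.exp (Γ * s / 2) * (ξ τ * Real.exp (-Γ * τ / 2))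
          = ξ τ * Real.exp (Γ * (s - τ) / 2) := by
        rw [mul_comm (Real.exp (Γ * s / 2)), mul_assoc, ← Real.exp_add]
        congr 2
        ring
      rw [Pi.mul_apply, Pi.mul_apply, h1, h2]
      apply mul_le_mul_of_nonneg_left _ (hξ τ hτ.1)
      apply Real.exp_le_exp.2
      nlinarith [hτ.2, hΓ.le]
    calc ξ s * Real.exp (-Γ * s / 2) * u s = ξ s * (Real.exp (-Γ * s / 2) * u s) := by ring
      _ ≤ ξ s * (Real.exp (Γ * s / 2) * v s) :=
        mul_le_mul_of_nonneg_left hsd (hξ s hs.1)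
      _ = ξ s * Real.exp (Γ * s / 2) * v s := by ring
  have hCpos : ∀ t : ℝ, 0 ≤ t → 0 < C t := by
    intro t ht
    have hBp := hBpos t ht
    rw [hB] at hBp
    have hx : 0 < 1 - 4 * κ * Γ * ∫ s in (0:ℝ)..t,
        ξ s * Real.exp (Γ * s / 2) * v s := by
      by_contra h
      push_neg at h
      nlinarith [Real.exp_pos (-Γ * t)]
    rw [hC]
    have hy : 0 < 1 - 2 * κ * Γ * ∫ s in (0:ℝ)..t,
        ξ s * Real.exp (-Γ * s / 2) * u s := by
      have := hQP t ht
      nlinarith [mul_nonneg (mul_nonneg (by norm_num : (0:ℝ) ≤ 2) hκ0) hΓ.le]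
    exact mul_pos (Real.exp_pos _) hy
  intro t ht
  have hBp := hBpos t ht
  have hCp := hCpos t ht
  have hdB : deriv B t = -Γ * B t - 4 * κ * Γ * (ξ t * Real.exp (-Γ * t / 2) * v t) :=
    (hBd t).deriv
  have hdC : deriv C t = -(Γ/2) * C t - 2 * κ * Γ * (ξ t * Real.exp (-Γ * t) * u t) :=
    (hCd t).deriv
  have h1 : 0 ≤ 4 * κ * Γ * (ξ t * Real.exp (-Γ * t / 2) * v t) := by
    apply mul_nonneg (by positivity)
    exact mul_nonneg (mul_nonneg (hξ t ht) (Real.exp_nonneg _)) (hv0 t ht)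
  have h2 : 0 ≤ 2 * κ * Γ * (ξ t * Real.exp (-Γ * t) * u t) := by
    apply mul_nonneg (by positivity)
    exact mul_nonneg (mul_nonneg (hξ t ht) (Real.exp_nonneg _)) (hu0 t ht)
  constructor
  · apply div_nonneg _ hBp.le
    rw [hdB]; nlinarith
  · apply div_nonneg _ hCp.le
    rw [hdC]; nlinarith
end

section
/- The off-resonant exponential-profile excitation amplitude A(t) = (4κα Γ²/((1−α)²Γ² + 4Δ₀²))(e^{−Γt} − 2e^{−(1+α)Γt/2} cos(Δ₀ t) + e^{−αΓt}), viewed as a function of (α, Δ₀, t) with κ ∈ (0,1] and Γ > 0 fixed, satisfies A(α, Δ₀, t) ≤ 4κ/e² for all α > 0 (α ≠ 1), all Δ₀ ∈ ℝ, and all t ≥ 0, and the supremum 4κ/e² is approached as α → 1, Δ₀ → 0, t → 2/Γ. -/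
open Real Filter

lemma aux_we {w : ℝ} (hw : 0 ≤ w) : w * Real.exp (-w) ≤ Real.exp (-1) := by
  have h := Real.add_one_le_exp (w - 1)
  have hpos := Real.exp_pos (-w)
  have : w * Real.exp (-w) ≤ Real.exp (w-1) * Real.exp (-w) := by nlinarith
  rwa [← Real.exp_add, show w - 1 + -w = -1 by ring] at this

lemma aux_v {v : ℝ} (hv : 0 ≤ v) : v^2 * Real.exp (-v) ≤ 4 * Real.exp (-2) := by
  have h := aux_we (w := v/2) (by linarith)
  have h2 : Real.exp (-v) = Real.exp (-(v/2)) * Real.exp (-(v/2)) := by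
    rw [← Real.exp_add]; ring_nf
  have h3 : Real.exp (-2) = Real.exp (-1) * Real.exp (-1) := by
    rw [← Real.exp_add]; ring_nf
  have hp := Real.exp_pos (-(v/2))
  have hp1 := Real.exp_pos (-1)
  have hll : 0 ≤ v/2 * Real.exp (-(v/2)) := by positivity
  have hmm := mul_le_mul h h hll hp1.le
  nlinarith [hmm]

lemma aux_mono {a b : ℝ} (ha : 0 < a) (hab : a ≤ b) :
    Real.exp (-a) - Real.exp (-b) ≤ (Real.log b - Real.log a) * Real.exp (-1) := by
  set f : ℝ → ℝ := fun x => Real.log x * Real.exp (-1) + Real.exp (-x) with hf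
  have key : ∀ x ∈ Set.Ioi a, HasDerivAt f (x⁻¹ * Real.exp (-1) + Real.exp (-x) * (-1)) x := by
    intro x hx
    have hx0 : 0 < x := lt_trans ha hx
    exact ((Real.hasDerivAt_log hx0.ne').mul_const _).add
      ((Real.hasDerivAt_exp (-x)).comp x ((hasDerivAt_id x).neg))
  have hmono : MonotoneOn f (Set.Ici a) := by
    apply monotoneOn_of_deriv_nonneg (convex_Ici a)
    · intro x hx
      have hx0 : 0 < x := lt_of_lt_of_le ha hx
      exact ((Real.continuousAt_log hx0.ne').continuousWithinAt.mul continuousWithinAt_const).add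
        ((Real.continuous_exp.comp continuous_neg).continuousWithinAt)
    · rw [interior_Ici]
      intro x hx
      exact (key x hx).differentiableAt.differentiableWithinAt
    · rw [interior_Ici]
      intro x hx
      rw [(key x hx).deriv]
      have hx0 : 0 < x := lt_trans ha hx
      have h1 : Real.log x ≤ x - 1 := Real.log_le_sub_one_of_pos hx0
      have h2 : x * Real.exp (-x) ≤ Real.exp (-1) := aux_we hx0.le
      have : Real.exp (-x) ≤ x⁻¹ * Real.exp (-1) := by
        rw [le_inv_mul_iff₀ hx0]
        linarith [mul_comm x (Real.exp (-x))]
      linarith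
  have := hmono (Set.self_mem_Ici) (by exact hab : b ∈ Set.Ici a) hab
  simp only [hf] at this
  linarith

lemma aux_2logt {t : ℝ} (ht : 1 ≤ t) : 2 * Real.log t ≤ t - 1/t := by
  rcases eq_or_lt_of_le ht with h | h
  · simp [← h]
  · have hu : 0 < Real.log t := Real.log_pos h
    have hs : Real.log t < Real.sinh (Real.log t) := Real.self_lt_sinh_iff.mpr hu
    rw [Real.sinh_eq, Real.exp_log (by linarith), Real.exp_neg, Real.exp_log (by linarith)] at hs
    have : (1:ℝ)/t = t⁻¹ := one_div t
    linarith

lemma key_sqrtlog {s : ℝ} (hs : 0 < s) : Real.sqrt s * |Real.log s| ≤ |1 - s| := by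
  have hsq : Real.sqrt s * Real.sqrt s = s := Real.mul_self_sqrt hs.le
  have hlog : Real.log (Real.sqrt s) = Real.log s / 2 := Real.log_sqrt hs.le
  rcases le_or_gt 1 s with h1 | h1
  · have ht : 1 ≤ Real.sqrt s := by
      nlinarith [Real.sqrt_nonneg s]
    have h2 := aux_2logt ht
    rw [hlog] at h2
    have ht0 : 0 < Real.sqrt s := by linarith
    have h3 : Real.sqrt s * (1 / Real.sqrt s) = 1 := by
      field_simp
    have hls : 0 ≤ Real.log s := Real.log_nonneg h1
    rw [abs_of_nonneg hls, abs_of_nonpos (by linarith : 1 - s ≤ 0)]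
    nlinarith
  · have ht0 : 0 < Real.sqrt s := Real.sqrt_pos.mpr hs
    have ht1 : Real.sqrt s < 1 := by nlinarith
    have ht : 1 ≤ 1 / Real.sqrt s := by
      rw [le_div_iff₀ ht0]; linarith
    have h2 := aux_2logt ht
    have hinv : Real.log (1 / Real.sqrt s) = -(Real.log s / 2) := by
      rw [one_div, Real.log_inv, hlog]
    rw [hinv] at h2
    have h3 : (1:ℝ) / (1 / Real.sqrt s) = Real.sqrt s := by field_simp
    rw [h3] at h2
    have hls : Real.log s < 0 := Real.log_neg hs h1
    rw [abs_of_neg hls, abs_of_nonneg (by linarith : (0:ℝ) ≤ 1 - s)]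
    -- h2 : 2 * -(log s / 2) ≤ 1/√s - √s ; multiply by √s
    have := mul_le_mul_of_nonneg_left h2 ht0.le
    have h4 : Real.sqrt s * (1 / Real.sqrt s) = 1 := by field_simp
    nlinarith

lemma key1 {s x : ℝ} (hs : 0 < s) (hx : 0 ≤ x) :
    s * (Real.exp (-x) - Real.exp (-(s*x)))^2 ≤ (1 - s)^2 * Real.exp (-2) := by
  rcases eq_or_lt_of_le hx with h0 | h0
  · simp [← h0]
    positivity
  have habs : |Real.exp (-x) - Real.exp (-(s*x))| ≤ |Real.log s| * Real.exp (-1) := by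
    have hlogsx : Real.log (s*x) = Real.log s + Real.log x := Real.log_mul hs.ne' h0.ne'
    rcases le_or_gt s 1 with h1 | h1
    · have hle : s * x ≤ x := by nlinarith
      have hm := aux_mono (a := s*x) (b := x) (by positivity) hle
      rw [hlogsx] at hm
      have hexple : Real.exp (-x) ≤ Real.exp (-(s*x)) := Real.exp_le_exp.mpr (by linarith)
      rw [abs_sub_comm, abs_of_nonneg (by linarith)]
      have hlabs : |Real.log s| = -Real.log s := by
        rw [abs_of_nonpos (Real.log_nonpos hs.le h1)]
      rw [hlabs]
      nlinarith [Real.exp_pos (-1)]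
    · have hle : x ≤ s * x := by nlinarith
      have hm := aux_mono (a := x) (b := s*x) h0 hle
      rw [hlogsx] at hm
      have hexple : Real.exp (-(s*x)) ≤ Real.exp (-x) := Real.exp_le_exp.mpr (by linarith)
      rw [abs_of_nonneg (by linarith)]
      have hlabs : |Real.log s| = Real.log s := by
        rw [abs_of_nonneg (Real.log_nonneg h1.le)]
      rw [hlabs]
      nlinarith [Real.exp_pos (-1)]
  have hA : Real.sqrt s * |Real.exp (-x) - Real.exp (-(s*x))| ≤ |1 - s| * Real.exp (-1) := by
    calc Real.sqrt s * |Real.exp (-x) - Real.exp (-(s*x))|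
        ≤ Real.sqrt s * (|Real.log s| * Real.exp (-1)) :=
          mul_le_mul_of_nonneg_left habs (Real.sqrt_nonneg s)
      _ = (Real.sqrt s * |Real.log s|) * Real.exp (-1) := by ring
      _ ≤ |1 - s| * Real.exp (-1) :=
          mul_le_mul_of_nonneg_right (key_sqrtlog hs) (Real.exp_pos _).le
  have hnn : 0 ≤ Real.sqrt s * |Real.exp (-x) - Real.exp (-(s*x))| := by positivity
  have hsq := mul_le_mul hA hA hnn (by positivity)
  have e1 : Real.sqrt s * |Real.exp (-x) - Real.exp (-(s*x))| *
      (Real.sqrt s * |Real.exp (-x) - Real.exp (-(s*x))|) =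
      s * (Real.exp (-x) - Real.exp (-(s*x)))^2 := by
    rw [show Real.sqrt s * |Real.exp (-x) - Real.exp (-(s*x))| *
      (Real.sqrt s * |Real.exp (-x) - Real.exp (-(s*x))|) =
      (Real.sqrt s * Real.sqrt s) * (|Real.exp (-x) - Real.exp (-(s*x))| *
        |Real.exp (-x) - Real.exp (-(s*x))|) by ring,
      Real.mul_self_sqrt hs.le, abs_mul_abs_self]
    ring
  have e2 : |1 - s| * Real.exp (-1) * (|1 - s| * Real.exp (-1)) =
      (1 - s)^2 * Real.exp (-2) := by
    rw [show |1 - s| * Real.exp (-1) * (|1 - s| * Real.exp (-1)) =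
      (|1 - s| * |1 - s|) * (Real.exp (-1) * Real.exp (-1)) by ring,
      abs_mul_abs_self, ← Real.exp_add]
    norm_num
    ring
  rw [e1, e2] at hsq
  exact hsq

lemma key2 {s x : ℝ} (hs : 0 < s) (hx : 0 ≤ x) :
    s * x^2 * Real.exp (-((1+s)*x)) ≤ Real.exp (-2) := by
  have h4 : 4*s ≤ (1+s)^2 := by nlinarith [sq_nonneg (1-s)]
  have hv := aux_v (v := (1+s)*x) (by positivity)
  have hp := Real.exp_pos (-((1+s)*x))
  nlinarith [sq_nonneg x, mul_le_mul_of_nonneg_right h4 (mul_nonneg (sq_nonneg x) hp.le)]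
noncomputable def Aoff (Γ κ : ℝ) (α Δ t : ℝ) : ℝ :=
  (4 * κ * α * Γ ^ 2 / ((1 - α) ^ 2 * Γ ^ 2 + 4 * Δ ^ 2)) *
    (Real.exp (-Γ * t) - 2 * Real.exp (-(1 + α) * Γ * t / 2) * Real.cos (Δ * t) +
      Real.exp (-α * Γ * t))

lemma main_bound (Γ κ : ℝ) (hΓ : 0 < Γ) (hκ0 : 0 < κ) {α Δ t : ℝ}
    (hα : 0 < α) (hα1 : α ≠ 1) (ht : 0 ≤ t) :
    Aoff Γ κ α Δ t ≤ 4 * κ / Real.exp 2 := by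
  set x := Γ * t / 2 with hxdef
  have hx : 0 ≤ x := by positivity
  set e₁ := Real.exp (-x) with he1
  set e₂ := Real.exp (-(α * x)) with he2
  have he1p : 0 < e₁ := Real.exp_pos _
  have he2p : 0 < e₂ := Real.exp_pos _
  have h1α : 1 - α ≠ 0 := sub_ne_zero.mpr (Ne.symm hα1)
  have h1sq : 0 < (1 - α)^2 := lt_of_le_of_ne (sq_nonneg _) (Ne.symm (pow_ne_zero 2 h1α))
  have hD : 0 < (1 - α)^2 * Γ^2 + 4 * Δ^2 := by nlinarith [mul_pos h1sq (pow_pos hΓ 2), sq_nonneg Δ]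
  have eΓt : Real.exp (-Γ * t) = e₁^2 := by
    rw [he1, sq, ← Real.exp_add]; congr 1; rw [hxdef]; ring
  have eαΓt : Real.exp (-α * Γ * t) = e₂^2 := by
    rw [he2, sq, ← Real.exp_add]; congr 1; rw [hxdef]; ring
  have emid : Real.exp (-(1 + α) * Γ * t / 2) = e₁ * e₂ := by
    rw [he1, he2, ← Real.exp_add]; congr 1; rw [hxdef]; ring
  have hcos := Real.one_sub_sq_div_two_le_cos (x := Δ * t)
  have hB : e₁^2 - 2*(e₁*e₂)*Real.cos (Δ*t) + e₂^2 ≤ (e₁ - e₂)^2 + e₁*e₂*(Δ*t)^2 := by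
    nlinarith [mul_pos he1p he2p]
  have hk1 := key1 hα hx
  have hk2 := key2 hα hx
  have hmm : Real.exp (-((1+α)*x)) = e₁ * e₂ := by
    rw [he1, he2, ← Real.exp_add]; congr 1; ring
  rw [hmm] at hk2
  have hx2 : x^2 = Γ^2 * t^2 / 4 := by rw [hxdef]; ring
  have hmain : α*Γ^2*((e₁ - e₂)^2 + e₁*e₂*(Δ*t)^2)
      ≤ Real.exp (-2) * ((1-α)^2*Γ^2 + 4*Δ^2) := by
    have t1 : Γ^2 * (α * (e₁-e₂)^2) ≤ Γ^2 * ((1-α)^2 * Real.exp (-2)) :=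
      mul_le_mul_of_nonneg_left hk1 (sq_nonneg Γ)
    have t2 : (4*Δ^2) * (α * x^2 * (e₁*e₂)) ≤ (4*Δ^2) * Real.exp (-2) :=
      mul_le_mul_of_nonneg_left hk2 (by positivity)
    have expand : α*Γ^2*((e₁ - e₂)^2 + e₁*e₂*(Δ*t)^2)
        = Γ^2*(α*(e₁-e₂)^2) + (4*Δ^2)*(α*x^2*(e₁*e₂)) := by rw [hx2]; ring
    have req : Real.exp (-2) * ((1-α)^2*Γ^2+4*Δ^2)
        = Γ^2*((1-α)^2*Real.exp (-2)) + (4*Δ^2)*Real.exp (-2) := by ring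
    rw [expand, req]; linarith
  have hexp2 : (4:ℝ) * κ / Real.exp 2 = 4 * κ * Real.exp (-2) := by
    rw [Real.exp_neg]; ring
  simp only [Aoff]
  rw [eΓt, eαΓt, emid, hexp2, div_mul_eq_mul_div, div_le_iff₀ hD]
  have hstep : α*Γ^2*(e₁^2 - 2*(e₁*e₂)*Real.cos (Δ*t) + e₂^2)
      ≤ Real.exp (-2) * ((1-α)^2*Γ^2+4*Δ^2) :=
    le_trans (mul_le_mul_of_nonneg_left hB (by positivity)) hmain
  nlinarith [mul_le_mul_of_nonneg_left hstep (by positivity : (0:ℝ) ≤ 4*κ)]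
lemma onesubcos {θ : ℝ} (hθ : |θ| ≤ 1) :
    θ^2/2 * (1 - θ^2/16)^2 ≤ 1 - Real.cos θ := by
  have habs : Real.cos |θ| = Real.cos θ := Real.cos_abs θ
  have hsq : |θ|^2 = θ^2 := sq_abs θ
  rw [← habs, ← hsq]
  set u := |θ| with hu
  have hu0 : 0 ≤ u := abs_nonneg θ
  have hu1 : u ≤ 1 := hθ
  rcases eq_or_lt_of_le hu0 with h0 | h0
  · rw [← h0]; simp
  · have hy0 : 0 < u/2 := by linarith
    have hy1 : u/2 ≤ 1 := by linarith
    have hsin : u/2 - (u/2)^3/4 < Real.sin (u/2) := by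
      have := Real.sin_gt_sub_cube hy0
      linarith [pow_pos hy0 3]
    have hid : Real.cos u = 1 - 2 * Real.sin (u/2)^2 := by
      have h := Real.cos_two_mul (u/2)
      have h2 := Real.sin_sq_add_cos_sq (u/2)
      rw [show 2*(u/2) = u by ring] at h
      linarith
    have hc : u/2 - (u/2)^3/4 = u/2 * (1 - u^2/16) := by ring
    have hcnn : 0 ≤ u/2 * (1 - u^2/16) := by nlinarith
    have hsin2 : u/2 * (1 - u^2/16) ≤ Real.sin (u/2) := by rw [← hc]; linarith
    nlinarith [mul_self_le_mul_self hcnn hsin2]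

set_option maxHeartbeats 1600000 in
lemma lower_bound (Γ κ : ℝ) (hΓ : 0 < Γ) (hκ0 : 0 < κ) {α Δ t : ℝ}
    (hα : 0 < α) (hα1 : α ≠ 1) (ht : 0 < t) (hθ : |Δ * t| ≤ 1) :
    4*κ*α*(Γ*t/2)^2 * min (Real.exp (-(2 * (max 1 α) * (Γ*t/2))))
        (Real.exp (-((1+α)*(Γ*t/2))) * (1 - (Δ*t)^2/16)^2)
      ≤ Aoff Γ κ α Δ t := by
  set x := Γ * t / 2 with hxdef
  have hx : 0 < x := by positivity
  set e₁ := Real.exp (-x) with he1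
  set e₂ := Real.exp (-(α * x)) with he2
  clear_value e₁ e₂
  have he1p : 0 < e₁ := he1 ▸ Real.exp_pos _
  have he2p : 0 < e₂ := he2 ▸ Real.exp_pos _
  have h1α : 1 - α ≠ 0 := sub_ne_zero.mpr (Ne.symm hα1)
  have h1sq : 0 < (1 - α)^2 := lt_of_le_of_ne (sq_nonneg _) (Ne.symm (pow_ne_zero 2 h1α))
  have hD : 0 < (1 - α)^2 * Γ^2 + 4 * Δ^2 := by
    nlinarith [mul_pos h1sq (pow_pos hΓ 2), sq_nonneg Δ]
  have eΓt : Real.exp (-Γ * t) = e₁^2 := by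
    rw [he1, sq, ← Real.exp_add]; congr 1; rw [hxdef]; ring
  have eαΓt : Real.exp (-α * Γ * t) = e₂^2 := by
    rw [he2, sq, ← Real.exp_add]; congr 1; rw [hxdef]; ring
  have emid : Real.exp (-(1 + α) * Γ * t / 2) = e₁ * e₂ := by
    rw [he1, he2, ← Real.exp_add]; congr 1; rw [hxdef]; ring
  set m := min (Real.exp (-(2 * (max 1 α) * x)))
      (Real.exp (-((1+α)*x)) * (1 - (Δ*t)^2/16)^2) with hm
  clear_value m
  have hmle1 : m ≤ Real.exp (-(2 * (max 1 α) * x)) := hm ▸ min_le_left _ _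
  have hmle2 : m ≤ Real.exp (-((1+α)*x)) * (1 - (Δ*t)^2/16)^2 := hm ▸ min_le_right _ _
  have hmpos : 0 < Real.exp (-(2 * (max 1 α) * x)) := Real.exp_pos _
  -- (i) square difference lower bound
  have hi : (1-α)^2 * x^2 * Real.exp (-(2 * (max 1 α) * x)) ≤ (e₁ - e₂)^2 := by
    rcases le_or_gt α 1 with hle | hlt
    · have hM : max 1 α = 1 := max_eq_left hle
      rw [hM]
      have hadd := Real.add_one_le_exp ((1-α)*x)
      have hmul := mul_le_mul_of_nonneg_left hadd he1p.le
      rw [he1] at hmul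
      rw [← Real.exp_add, show -x + (1-α)*x = -(α*x) by ring, ← he2, ← he1] at hmul
      have hdiffnn : 0 ≤ (1-α)*x*e₁ :=
        mul_nonneg (mul_nonneg (by linarith) hx.le) he1p.le
      have hd : (1-α)*x*e₁ ≤ e₂ - e₁ := by nlinarith
      have hex : Real.exp (-(2 * 1 * x)) = e₁^2 := by
        rw [he1, sq, ← Real.exp_add]; congr 1; ring
      rw [hex]
      nlinarith [mul_self_le_mul_self hdiffnn hd]
    · have hM : max 1 α = α := max_eq_right hlt.le
      rw [hM]
      have hadd := Real.add_one_le_exp ((α-1)*x)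
      have hmul := mul_le_mul_of_nonneg_left hadd he2p.le
      rw [he2] at hmul
      rw [← Real.exp_add, show -(α*x) + (α-1)*x = -x by ring, ← he1, ← he2] at hmul
      have hdiffnn : 0 ≤ (α-1)*x*e₂ :=
        mul_nonneg (mul_nonneg (by linarith) hx.le) he2p.le
      have hd : (α-1)*x*e₂ ≤ e₁ - e₂ := by nlinarith
      have hex : Real.exp (-(2 * α * x)) = e₂^2 := by
        rw [he2, sq, ← Real.exp_add]; congr 1; ring
      rw [hex]
      nlinarith [mul_self_le_mul_self hdiffnn hd]
  -- (ii) cosine lower bound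
  have hii : (Δ*t)^2/2 * (1 - (Δ*t)^2/16)^2 ≤ 1 - Real.cos (Δ*t) := onesubcos hθ
  have hx2 : x^2 = Γ^2 * t^2 / 4 := by rw [hxdef]; ring
  have hEs : 0 < Real.exp (-((1+α)*x)) := Real.exp_pos _
  have he12 : e₁ * e₂ = Real.exp (-((1+α)*x)) := by
    rw [he1, he2, ← Real.exp_add]; congr 1; ring
  have hcomb : x^2 * m * ((1 - α)^2 * Γ^2 + 4 * Δ^2)
      ≤ Γ^2 * (e₁^2 - 2*(e₁*e₂)*Real.cos (Δ*t) + e₂^2) := by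
    have term1 : (1-α)^2 * Γ^2 * (x^2 * m) ≤ Γ^2 * (e₁ - e₂)^2 :=
      calc (1-α)^2 * Γ^2 * (x^2 * m)
          = Γ^2 * ((1-α)^2 * x^2 * m) := by ring
        _ ≤ Γ^2 * ((1-α)^2 * x^2 * Real.exp (-(2 * (max 1 α) * x))) := by
            apply mul_le_mul_of_nonneg_left _ (sq_nonneg Γ)
            exact mul_le_mul_of_nonneg_left hmle1 (by positivity)
        _ ≤ Γ^2 * (e₁ - e₂)^2 := mul_le_mul_of_nonneg_left hi (sq_nonneg Γ)
    have term2 : 4 * Δ^2 * (x^2 * m) ≤ Γ^2 * (2*(e₁*e₂)*(1 - Real.cos (Δ*t))) := by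
      rw [he12]
      calc 4 * Δ^2 * (x^2 * m)
          ≤ 4 * Δ^2 * x^2 * (Real.exp (-((1+α)*x)) * (1 - (Δ*t)^2/16)^2) := by
            rw [show 4 * Δ^2 * (x^2 * m) = (4 * Δ^2 * x^2) * m by ring]
            exact mul_le_mul_of_nonneg_left hmle2 (by positivity)
        _ = 2 * Γ^2 * (Real.exp (-((1+α)*x)) * ((Δ*t)^2/2 * (1 - (Δ*t)^2/16)^2)) := by
            rw [hx2]; ring
        _ ≤ 2 * Γ^2 * (Real.exp (-((1+α)*x)) * (1 - Real.cos (Δ*t))) := by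
            apply mul_le_mul_of_nonneg_left _ (by positivity : (0:ℝ) ≤ 2 * Γ^2)
            exact mul_le_mul_of_nonneg_left hii hEs.le
        _ = Γ^2 * (2*(Real.exp (-((1+α)*x)))*(1 - Real.cos (Δ*t))) := by ring
    calc x^2 * m * ((1 - α)^2 * Γ^2 + 4 * Δ^2)
        = (1-α)^2 * Γ^2 * (x^2 * m) + 4 * Δ^2 * (x^2 * m) := by ring
      _ ≤ Γ^2 * (e₁ - e₂)^2 + Γ^2 * (2*(e₁*e₂)*(1 - Real.cos (Δ*t))) :=
          add_le_add term1 term2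
      _ = Γ^2 * (e₁^2 - 2*(e₁*e₂)*Real.cos (Δ*t) + e₂^2) := by ring
  simp only [Aoff]
  rw [eΓt, eαΓt, emid, div_mul_eq_mul_div, le_div_iff₀ hD]
  have hfin := mul_le_mul_of_nonneg_left hcomb (by positivity : (0:ℝ) ≤ 4*κ*α)
  refine le_trans (le_of_eq ?_) (le_trans hfin (le_of_eq ?_)) <;> ring
theorem stmt19 (Γ κ : ℝ) (hΓ : 0 < Γ) (hκ0 : 0 < κ) (hκ1 : κ ≤ 1) :
    (∀ α Δ t : ℝ, 0 < α → α ≠ 1 → 0 ≤ t →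
        Aoff Γ κ α Δ t ≤ 4 * κ / Real.exp 2) ∧
      Tendsto (fun p : ℝ × ℝ × ℝ => Aoff Γ κ p.1 p.2.1 p.2.2)
        (nhdsWithin (1, 0, 2 / Γ) {p : ℝ × ℝ × ℝ | p.1 ≠ 1})
        (nhds (4 * κ / Real.exp 2)) := by
  constructor
  · intro α Δ t hα hα1 ht
    exact main_bound Γ κ hΓ hκ0 hα hα1 ht
  · set p₀ : ℝ × ℝ × ℝ := (1, 0, 2/Γ) with hp₀
    set F := nhdsWithin p₀ {p : ℝ × ℝ × ℝ | p.1 ≠ 1} with hF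
    have hΓne : Γ ≠ 0 := hΓ.ne'
    have T1 : Tendsto (fun p : ℝ×ℝ×ℝ => p.1) F (nhds 1) := by
      simpa using (continuous_fst.tendsto p₀).mono_left nhdsWithin_le_nhds
    have T2 : Tendsto (fun p : ℝ×ℝ×ℝ => p.2.1) F (nhds 0) := by
      exact ((continuous_fst.comp continuous_snd).tendsto p₀).mono_left
        nhdsWithin_le_nhds
    have T3 : Tendsto (fun p : ℝ×ℝ×ℝ => p.2.2) F (nhds (2/Γ)) := by
      exact ((continuous_snd.comp continuous_snd).tendsto p₀).mono_left
        nhdsWithin_le_nhds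
    have Tθ : Tendsto (fun p : ℝ×ℝ×ℝ => p.2.1 * p.2.2) F (nhds 0) := by
      simpa using T2.mul T3
    have hev1 : ∀ᶠ p in F, 0 < p.1 := T1.eventually (eventually_gt_nhds one_pos)
    have hev3 : ∀ᶠ p in F, 0 < p.2.2 :=
      T3.eventually (eventually_gt_nhds (by positivity))
    have hevθ : ∀ᶠ p in F, |p.2.1 * p.2.2| ≤ 1 := by
      refine Tθ.eventually (p := fun x => |x| ≤ 1) ?_
      filter_upwards [Icc_mem_nhds (by norm_num : (-1:ℝ) < 0) (by norm_num : (0:ℝ) < 1)]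
        with x hx
      exact abs_le.mpr ⟨hx.1, hx.2⟩
    have hevS : ∀ᶠ p in F, p.1 ≠ 1 := eventually_mem_nhdsWithin
    set g : ℝ×ℝ×ℝ → ℝ := fun p => 4*κ*p.1*(Γ*p.2.2/2)^2 *
        min (Real.exp (-(2 * (max 1 p.1) * (Γ*p.2.2/2))))
          (Real.exp (-((1+p.1)*(Γ*p.2.2/2))) * (1 - (p.2.1*p.2.2)^2/16)^2) with hg
    have hgc : Continuous g := by rw [hg]; fun_prop
    have hgval : g p₀ = 4*κ/Real.exp 2 := by
      simp only [hg, hp₀]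
      rw [show Γ*(2/Γ)/2 = 1 by field_simp]
      norm_num
      rw [Real.exp_neg]
      ring
    have hgT : Tendsto g F (nhds (4*κ/Real.exp 2)) := by
      rw [← hgval]
      exact (hgc.tendsto p₀).mono_left nhdsWithin_le_nhds
    refine tendsto_of_tendsto_of_tendsto_of_le_of_le' hgT tendsto_const_nhds ?_ ?_
    · filter_upwards [hevS, hev1, hev3, hevθ] with p h1 h2 h3 h4
      exact lower_bound Γ κ hΓ hκ0 h2 h1 h3 h4
    · filter_upwards [hevS, hev1, hev3] with p h1 h2 h3
      exact main_bound Γ κ hΓ hκ0 h2 h1 h3.le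
end
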